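/- arXiv:1204.3488 — 6 statements merged into one kernel-verified Lean document; each statement's English description precedes it below -/
import Mathlib

section
/- If a set P of points in the Euclidean plane ℝ² has diameter at most 1 (i.e., every two points of P are at Euclidean distance at most 1), then P is contained in some closed disk of radius 1/√3. -/
set_option maxHeartbeats 1000000

open Metric Finset

/-- Midpoint case: if the triangle is obtuse or right at `a`, the midpoint of `b c` works. -/
private lemma jung3_mid (a0 a1 b0 b1 c0 c1 : ℝ)
    (hbc : (b0-c0)^2 + (b1-c1)^2 ≤ 1)
    (hobt : (a0-c0)^2 + (a1-c1)^2 + ((a0-b0)^2 + (a1-b1)^2) ≤ (b0-c0)^2 + (b1-c1)^2) :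
    ((b0+c0)/2 - a0)^2 + ((b1+c1)/2 - a1)^2 ≤ 1/3 ∧
    ((b0+c0)/2 - b0)^2 + ((b1+c1)/2 - b1)^2 ≤ 1/3 ∧
    ((b0+c0)/2 - c0)^2 + ((b1+c1)/2 - c1)^2 ≤ 1/3 := by
  refine ⟨by nlinarith, by nlinarith, by nlinarith⟩

private lemma jung3_core (u v w : ℝ) (hu : u ≤ 1) (hv : v ≤ 1) (hw : w ≤ 1)
    (hp : u < v + w) (hq : v < w + u) (hr : w < u + v) :
    3*u*v*w ≤ 2*(u*v+v*w+w*u) - u^2 - v^2 - w^2 := by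
  nlinarith [mul_pos (sub_pos.2 hp) (sub_pos.2 hq), mul_pos (sub_pos.2 hq) (sub_pos.2 hr),
    mul_pos (sub_pos.2 hp) (sub_pos.2 hr),
    mul_nonneg (mul_nonneg (sub_nonneg.2 hu) (sub_pos.2 hp).le) (sub_pos.2 hq).le,
    mul_nonneg (mul_nonneg (sub_nonneg.2 hv) (sub_pos.2 hq).le) (sub_pos.2 hr).le,
    mul_nonneg (mul_nonneg (sub_nonneg.2 hw) (sub_pos.2 hr).le) (sub_pos.2 hp).le]

/-- Jung's theorem for three points, in coordinates. -/
private lemma jung3_coords (a0 a1 b0 b1 c0 c1 : ℝ)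
    (hab : (a0-b0)^2 + (a1-b1)^2 ≤ 1)
    (hac : (a0-c0)^2 + (a1-c1)^2 ≤ 1)
    (hbc : (b0-c0)^2 + (b1-c1)^2 ≤ 1) :
    ∃ x0 x1 : ℝ, (x0-a0)^2 + (x1-a1)^2 ≤ 1/3 ∧ (x0-b0)^2 + (x1-b1)^2 ≤ 1/3 ∧
      (x0-c0)^2 + (x1-c1)^2 ≤ 1/3 := by
  by_cases hA : (a0-c0)^2 + (a1-c1)^2 + ((a0-b0)^2 + (a1-b1)^2) ≤ (b0-c0)^2 + (b1-c1)^2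
  · obtain ⟨h1, h2, h3⟩ := jung3_mid a0 a1 b0 b1 c0 c1 hbc hA
    exact ⟨(b0+c0)/2, (b1+c1)/2, h1, h2, h3⟩
  by_cases hB : (b0-c0)^2 + (b1-c1)^2 + ((b0-a0)^2 + (b1-a1)^2) ≤ (a0-c0)^2 + (a1-c1)^2
  · obtain ⟨h1, h2, h3⟩ := jung3_mid b0 b1 a0 a1 c0 c1 hac (by nlinarith)
    exact ⟨(a0+c0)/2, (a1+c1)/2, h2, h1, h3⟩
  by_cases hC : (c0-a0)^2 + (c1-a1)^2 + ((c0-b0)^2 + (c1-b1)^2) ≤ (a0-b0)^2 + (a1-b1)^2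
  · obtain ⟨h1, h2, h3⟩ := jung3_mid c0 c1 a0 a1 b0 b1 hab (by nlinarith)
    exact ⟨(a0+b0)/2, (a1+b1)/2, h2, h3, h1⟩
  push_neg at hA hB hC
  set u := (b0-c0)^2 + (b1-c1)^2 with hu_def
  set v := (a0-c0)^2 + (a1-c1)^2 with hv_def
  set w := (a0-b0)^2 + (a1-b1)^2 with hw_def
  have hA' : u < v + w := by rw [hu_def, hv_def, hw_def]; nlinarith
  have hB' : v < w + u := by rw [hu_def, hv_def, hw_def]; nlinarith
  have hC' : w < u + v := by rw [hu_def, hv_def, hw_def]; nlinarith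
  set D := 2*((b0-a0)*(c1-a1) - (b1-a1)*(c0-a0)) with hD_def
  set N0 := w*(c1-a1) - v*(b1-a1) with hN0_def
  set N1 := v*(b0-a0) - w*(c0-a0) with hN1_def
  have hD2 : D^2 = 2*(u*v+v*w+w*u) - u^2 - v^2 - w^2 := by
    rw [hD_def, hu_def, hv_def, hw_def]; ring
  have hnum_a : N0^2 + N1^2 = u*v*w := by
    rw [hN0_def, hN1_def, hu_def, hv_def, hw_def]; ring
  have hnum_b : (N0 - (b0-a0)*D)^2 + (N1 - (b1-a1)*D)^2 = u*v*w := by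
    rw [hN0_def, hN1_def, hD_def, hu_def, hv_def, hw_def]; ring
  have hnum_c : (N0 - (c0-a0)*D)^2 + (N1 - (c1-a1)*D)^2 = u*v*w := by
    rw [hN0_def, hN1_def, hD_def, hu_def, hv_def, hw_def]; ring
  clear_value u v w D N0 N1
  clear hu_def hv_def hw_def hD_def hN0_def hN1_def hA hB hC
  have hD2pos : 0 < D^2 := by
    nlinarith [mul_pos (sub_pos.2 hA') (sub_pos.2 hB'), mul_pos (sub_pos.2 hB') (sub_pos.2 hC'),
      mul_pos (sub_pos.2 hA') (sub_pos.2 hC')]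
  have hD : D ≠ 0 := fun h => by rw [h] at hD2pos; simp at hD2pos
  have hkey : 3*(u*v*w) ≤ D^2 := by
    rw [hD2]
    have := jung3_core u v w hbc hac hab hA' hB' hC'
    linarith
  refine ⟨a0 + N0/D, a1 + N1/D, ?_, ?_, ?_⟩
  · have e : (a0 + N0/D - a0)^2 + (a1 + N1/D - a1)^2 = (N0^2 + N1^2)/D^2 := by
      field_simp; ring
    rw [e, hnum_a, div_le_iff₀ hD2pos]; linarith
  · have e : (a0 + N0/D - b0)^2 + (a1 + N1/D - b1)^2
        = ((N0 - (b0-a0)*D)^2 + (N1 - (b1-a1)*D)^2)/D^2 := by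
      field_simp; ring
    rw [e, hnum_b, div_le_iff₀ hD2pos]; linarith
  · have e : (a0 + N0/D - c0)^2 + (a1 + N1/D - c1)^2
        = ((N0 - (c0-a0)*D)^2 + (N1 - (c1-a1)*D)^2)/D^2 := by
      field_simp; ring
    rw [e, hnum_c, div_le_iff₀ hD2pos]; linarith

private lemma sq_dist_eq (x y : EuclideanSpace ℝ (Fin 2)) :
    dist x y ^ 2 = (x 0 - y 0)^2 + (x 1 - y 1)^2 := by
  rw [EuclideanSpace.dist_eq, Real.sq_sqrt (by positivity)]
  simp [Fin.sum_univ_two, Real.dist_eq, sq_abs]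

/-- Jung's theorem for three points of the Euclidean plane. -/
private lemma jung3 (a b c : EuclideanSpace ℝ (Fin 2))
    (hab : dist a b ≤ 1) (hac : dist a c ≤ 1) (hbc : dist b c ≤ 1) :
    ∃ x : EuclideanSpace ℝ (Fin 2), dist x a ≤ 1 / Real.sqrt 3 ∧
      dist x b ≤ 1 / Real.sqrt 3 ∧ dist x c ≤ 1 / Real.sqrt 3 := by
  have h1 : (a 0 - b 0)^2 + (a 1 - b 1)^2 ≤ 1 := by
    rw [← sq_dist_eq]; nlinarith [dist_nonneg (x := a) (y := b)]
  have h2 : (a 0 - c 0)^2 + (a 1 - c 1)^2 ≤ 1 := by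
    rw [← sq_dist_eq]; nlinarith [dist_nonneg (x := a) (y := c)]
  have h3 : (b 0 - c 0)^2 + (b 1 - c 1)^2 ≤ 1 := by
    rw [← sq_dist_eq]; nlinarith [dist_nonneg (x := b) (y := c)]
  obtain ⟨x0, x1, e1, e2, e3⟩ := jung3_coords (a 0) (a 1) (b 0) (b 1) (c 0) (c 1) h1 h2 h3
  set x : EuclideanSpace ℝ (Fin 2) := (WithLp.equiv 2 (Fin 2 → ℝ)).symm ![x0, x1] with hx
  have hx0 : x 0 = x0 := rfl
  have hx1 : x 1 = x1 := rfl
  have key : ∀ (p : EuclideanSpace ℝ (Fin 2)),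
      (x 0 - p 0)^2 + (x 1 - p 1)^2 ≤ 1/3 → dist x p ≤ 1 / Real.sqrt 3 := by
    intro p hp
    have h13 : (1:ℝ) / Real.sqrt 3 = Real.sqrt (1/3) := by
      rw [one_div, ← Real.sqrt_inv]; norm_num
    rw [EuclideanSpace.dist_eq, h13]
    apply Real.sqrt_le_sqrt
    simpa [Fin.sum_univ_two, Real.dist_eq, sq_abs] using hp
  exact ⟨x, key a (by rw [hx0, hx1]; exact e1), key b (by rw [hx0, hx1]; exact e2),
    key c (by rw [hx0, hx1]; exact e3)⟩

/-- Pál's universal cover theorem: a planar set of diameter at most 1 is contained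
in some closed disk of radius `1/√3`. -/
theorem pal_universal_cover (P : Set (EuclideanSpace ℝ (Fin 2)))
    (hdiam : ∀ x ∈ P, ∀ y ∈ P, dist x y ≤ 1) :
    ∃ c : EuclideanSpace ℝ (Fin 2), P ⊆ Metric.closedBall c (1 / Real.sqrt 3) := by
  classical
  have hr : (0:ℝ) ≤ 1 / Real.sqrt 3 := by positivity
  have hfin : Module.finrank ℝ (EuclideanSpace ℝ (Fin 2)) = 2 := finrank_euclideanSpace_fin
  have hinter : ∀ I : Finset ↥P, I.card ≤ Module.finrank ℝ (EuclideanSpace ℝ (Fin 2)) + 1 →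
      (⋂ i ∈ I, Metric.closedBall (i : EuclideanSpace ℝ (Fin 2)) (1 / Real.sqrt 3)).Nonempty := by
    intro I hI
    rw [hfin] at hI
    rcases I.eq_empty_or_nonempty with rfl | hne
    · simp
    have hcard1 : 1 ≤ I.card := Finset.card_pos.2 hne
    have hcov : ∃ p q r : ↥P, ∀ i ∈ I, i = p ∨ i = q ∨ i = r := by
      interval_cases h : I.card
      · obtain ⟨q, rfl⟩ := Finset.card_eq_one.1 h
        exact ⟨q, q, q, by simp⟩
      · obtain ⟨q, r, _, rfl⟩ := Finset.card_eq_two.1 h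
        refine ⟨q, r, r, ?_⟩
        simp only [Finset.mem_insert, Finset.mem_singleton]
        tauto
      · obtain ⟨q, r, t, _, _, _, rfl⟩ := Finset.card_eq_three.1 h
        refine ⟨q, r, t, ?_⟩
        simp only [Finset.mem_insert, Finset.mem_singleton]
        tauto
    obtain ⟨p, q, r, hcov⟩ := hcov
    obtain ⟨x, hxp, hxq, hxr⟩ := jung3 p q r (hdiam _ p.2 _ q.2) (hdiam _ p.2 _ r.2)
      (hdiam _ q.2 _ r.2)
    refine ⟨x, Set.mem_iInter₂.2 fun i hi => ?_⟩
    rcases hcov i hi with rfl | rfl | rfl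
    · exact Metric.mem_closedBall.2 hxp
    · exact Metric.mem_closedBall.2 hxq
    · exact Metric.mem_closedBall.2 hxr
  obtain ⟨c, hc⟩ := Convex.helly_theorem_compact' (𝕜 := ℝ)
    (F := fun p : ↥P => Metric.closedBall (p : EuclideanSpace ℝ (Fin 2)) (1 / Real.sqrt 3))
    (fun _ => convex_closedBall _ _) (fun _ => isCompact_closedBall _ _) hinter
  refine ⟨c, fun y hy => ?_⟩
  have := Set.mem_iInter.1 hc ⟨y, hy⟩
  rw [Metric.mem_closedBall] at this ⊢
  rwa [dist_comm]
end

section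
/- Let G be a unit disk graph, let I be an independent set of G, and let D* be a dominating set of G. Then |I| ≤ 5·|D*|. In particular, every maximal independent set of G (which is an independent dominating set) is a 5-approximation to the minimum dominating set of G. -/
set_option maxHeartbeats 1000000

open Complex Finset

lemma close_of_small_angle {u v : ℂ} (hu : ‖u‖ ≤ 1) (hv : ‖v‖ ≤ 1)
    (h : ‖u‖ * ‖v‖ / 2 ≤ (u * (starRingEnd ℂ) v).re) :
    dist u v ≤ 1 := by
  have hdist : dist u v ^ 2 = ‖u‖ ^ 2 + ‖v‖ ^ 2
      - 2 * (u * (starRingEnd ℂ) v).re := by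
    rw [Complex.dist_eq, Complex.sq_norm, Complex.normSq_sub, Complex.sq_norm, Complex.sq_norm]
  have ha := norm_nonneg u
  have hb := norm_nonneg v
  have h1 : dist u v ^ 2 ≤ 1 := by nlinarith [hdist]
  nlinarith [dist_nonneg (x := u) (y := v)]

lemma re_mul_conj (u v : ℂ) :
    (u * (starRingEnd ℂ) v).re
      = ‖u‖ * ‖v‖ * Real.cos (u.arg - v.arg) := by
  have h1 := Complex.norm_mul_cos_arg u
  have h2 := Complex.norm_mul_sin_arg u
  have h3 := Complex.norm_mul_cos_arg v
  have h4 := Complex.norm_mul_sin_arg v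
  rw [Complex.mul_re, Complex.conj_re, Complex.conj_im, Real.cos_sub, ← h1, ← h2, ← h3, ← h4]
  ring

/-- At most 5 points in the closed unit disk with pairwise distances > 1. -/
lemma disk_packing (S : Finset ℂ) (hnorm : ∀ z ∈ S, ‖z‖ ≤ 1)
    (hpair : (S : Set ℂ).Pairwise (fun z w => 1 < dist z w)) : S.card ≤ 5 := by
  by_contra hc
  push_neg at hc
  have h0 : (0 : ℂ) ∉ S := by
    intro h0
    have hne : (S.erase 0).Nonempty := by
      rw [← Finset.card_pos, Finset.card_erase_of_mem h0]; omega
    obtain ⟨z, hz⟩ := hne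
    have hz0 : z ≠ 0 := Finset.ne_of_mem_erase hz
    have hzS : z ∈ S := Finset.mem_of_mem_erase hz
    have h1 : 1 < dist (0:ℂ) z := hpair h0 hzS (Ne.symm hz0)
    rw [dist_comm, Complex.dist_eq, sub_zero] at h1
    linarith [hnorm z hzS]
  obtain ⟨z0, hz0⟩ : ∃ z0, z0 ∈ S := Finset.card_pos.1 (by omega) |>.imp (fun _ h => h)
  have hz0ne : z0 ≠ 0 := fun h => h0 (h ▸ hz0)
  set c : ℂ := (starRingEnd ℂ) z0 / (‖z0‖ : ℂ) with hc_def
  have hz0abs : ‖z0‖ ≠ 0 := norm_ne_zero_iff.mpr hz0ne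
  have hcabs : ‖c‖ = 1 := by
    rw [hc_def, norm_div, Complex.norm_conj, Complex.norm_real, Real.norm_eq_abs,
      _root_.abs_of_nonneg (norm_nonneg z0), div_self hz0abs]
  have hcne : c ≠ 0 := by
    intro h; rw [h] at hcabs; simp at hcabs
  set S' : Finset ℂ := S.image (· * c) with hS'
  have hinj : Set.InjOn (· * c) S := fun a _ b _ h => mul_right_cancel₀ hcne h
  have hcard' : S'.card = S.card := Finset.card_image_of_injOn hinj
  have h0' : (0 : ℂ) ∉ S' := by
    intro h
    obtain ⟨w', hw', hww⟩ := Finset.mem_image.1 h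
    have : w' = 0 := (mul_eq_zero.1 hww).resolve_right hcne
    exact h0 (this ▸ hw')
  have hnorm' : ∀ z ∈ S', ‖z‖ ≤ 1 := by
    intro z hz
    obtain ⟨w, hw, rfl⟩ := Finset.mem_image.1 hz
    rw [norm_mul, hcabs, mul_one]; exact hnorm w hw
  have hpair' : (S' : Set ℂ).Pairwise (fun z w => 1 < dist z w) := by
    intro a ha b hb hab
    obtain ⟨a', ha', rfl⟩ := Finset.mem_image.1 (by exact_mod_cast ha)
    obtain ⟨b', hb', rfl⟩ := Finset.mem_image.1 (by exact_mod_cast hb)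
    have hne : a' ≠ b' := fun h => hab (by rw [h])
    have heq : dist (a' * c) (b' * c) = dist a' b' := by
      rw [Complex.dist_eq, Complex.dist_eq, ← sub_mul, norm_mul, hcabs, mul_one]
    rw [heq]
    exact hpair (by exact_mod_cast ha') (by exact_mod_cast hb') hne
  set a0 : ℂ := z0 * c with ha0_def
  have ha0 : a0 ∈ S' := Finset.mem_image_of_mem _ hz0
  have ha0_real : a0 = ((‖z0‖ : ℝ) : ℂ) := by
    rw [ha0_def, hc_def, mul_div_assoc', Complex.mul_conj, Complex.normSq_eq_norm_sq]
    push_cast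
    rw [pow_two, mul_div_assoc, div_self (by exact_mod_cast hz0abs)]
    ring
  have ha0_arg : a0.arg = 0 := by
    rw [ha0_real]; exact Complex.arg_ofReal_of_nonneg (norm_nonneg z0)
  have key : ∀ z ∈ S', ∀ w ∈ S', z ≠ w → Real.cos (z.arg - w.arg) < 1/2 := by
    intro z hz w hw hzw
    by_contra hcos
    push_neg at hcos
    have hzne : z ≠ 0 := fun h => h0' (h ▸ hz)
    have hwne : w ≠ 0 := fun h => h0' (h ▸ hw)
    have habs : 0 < ‖z‖ * ‖w‖ :=
      mul_pos (norm_pos_iff.mpr hzne) (norm_pos_iff.mpr hwne)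
    have hre : ‖z‖ * ‖w‖ / 2 ≤ (z * (starRingEnd ℂ) w).re := by
      rw [re_mul_conj]; nlinarith
    have hle := close_of_small_angle (hnorm' z hz) (hnorm' w hw) hre
    exact absurd (hpair' (by exact_mod_cast hz) (by exact_mod_cast hw) hzw) (by linarith)
  have harg : ∀ z ∈ S', z ≠ a0 → Real.pi/3 < |z.arg| := by
    intro z hz hne
    have h1 := key z hz a0 ha0 hne
    rw [ha0_arg, sub_zero] at h1
    by_contra hle
    push_neg at hle
    have h2 : Real.cos (Real.pi/3) ≤ Real.cos |z.arg| :=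
      Real.cos_le_cos_of_nonneg_of_le_pi (abs_nonneg _) (by linarith [Real.pi_pos]) hle
    rw [Real.cos_abs, Real.cos_pi_div_three] at h2
    linarith
  set T : Finset ℂ := S'.erase a0 with hT
  have hTcard : 4 < T.card := by
    rw [hT, Finset.card_erase_of_mem ha0, hcard']; omega
  set f : ℂ → Fin 4 := fun z =>
    if z.arg ≤ -2*Real.pi/3 then 0
    else if z.arg < -Real.pi/3 then 1
    else if z.arg ≤ 2*Real.pi/3 then 2
    else 3 with hf
  obtain ⟨z, hzT, w, hwT, hzw, hfzw⟩ :=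
    Finset.exists_ne_map_eq_of_card_lt_of_maps_to (t := (Finset.univ : Finset (Fin 4)))
      (by simpa using hTcard) (fun a _ => Finset.mem_univ (f a))
  have hzS' : z ∈ S' := Finset.mem_of_mem_erase hzT
  have hwS' : w ∈ S' := Finset.mem_of_mem_erase hwT
  have hzarg := harg z hzS' (Finset.ne_of_mem_erase hzT)
  have hwarg := harg w hwS' (Finset.ne_of_mem_erase hwT)
  have hzpi : -Real.pi < z.arg ∧ z.arg ≤ Real.pi := ⟨Complex.neg_pi_lt_arg z, Complex.arg_le_pi z⟩
  have hwpi : -Real.pi < w.arg ∧ w.arg ≤ Real.pi := ⟨Complex.neg_pi_lt_arg w, Complex.arg_le_pi w⟩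
  obtain ⟨hzpi1, hzpi2⟩ := hzpi
  obtain ⟨hwpi1, hwpi2⟩ := hwpi
  have hsmall : |z.arg - w.arg| < Real.pi/3 := by
    have hpi := Real.pi_pos
    rw [abs_lt]
    rcases abs_cases z.arg with ⟨hz1, hz2⟩ | ⟨hz1, hz2⟩ <;>
      rcases abs_cases w.arg with ⟨hw1, hw2⟩ | ⟨hw1, hw2⟩ <;>
      rw [hz1] at hzarg <;> rw [hw1] at hwarg <;>
      simp only [hf] at hfzw <;>
      split_ifs at hfzw <;>
      first
        | exact absurd hfzw (by decide)
        | (constructor <;> linarith)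
  have hgt : Real.cos (z.arg - w.arg) > 1/2 := by
    have h1 : Real.cos (Real.pi/3) < Real.cos |z.arg - w.arg| :=
      Real.cos_lt_cos_of_nonneg_of_le_pi (abs_nonneg _) (by linarith [Real.pi_pos]) hsmall
    rw [Real.cos_abs, Real.cos_pi_div_three] at h1
    exact h1
  exact absurd (key z hzS' w hwS' hzw) (by linarith)

/-- A unit disk graph: a simple graph realized by planar points, two distinct
vertices being adjacent iff their Euclidean distance is at most 1. -/
def IsUnitDiskGraph {V : Type*} (G : SimpleGraph V) : Prop :=
  ∃ p : V → EuclideanSpace ℝ (Fin 2),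
    ∀ u v : V, G.Adj u v ↔ u ≠ v ∧ dist (p u) (p v) ≤ 1

/-- A set of pairwise non-adjacent vertices. -/
def IsIndependentSet {V : Type*} (G : SimpleGraph V) (S : Set V) : Prop :=
  S.Pairwise (fun u v => ¬ G.Adj u v)

/-- A dominating set: every vertex outside it has a neighbor in it. -/
def IsDominatingSet {V : Type*} (G : SimpleGraph V) (D : Set V) : Prop :=
  ∀ v : V, v ∉ D → ∃ u ∈ D, G.Adj u v

/-- In a unit disk graph, any independent set is at most 5 times larger than
any dominating set. -/
theorem indep_le_five_dominating {V : Type*} [Fintype V] (G : SimpleGraph V)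
    (hG : IsUnitDiskGraph G) (I : Set V) (hI : IsIndependentSet G I)
    (Dstar : Set V) (hD : IsDominatingSet G Dstar) :
    I.ncard ≤ 5 * Dstar.ncard := by
  classical
  obtain ⟨p, hp⟩ := hG
  -- points of I are pairwise far apart
  have hfar : ∀ u ∈ I, ∀ v ∈ I, u ≠ v → 1 < dist (p u) (p v) := by
    intro u hu v hv huv
    have hnadj : ¬ G.Adj u v := hI hu hv huv
    rw [hp] at hnadj
    push_neg at hnadj
    exact hnadj huv
  -- choose a dominator for each vertex of I
  have hdom : ∀ v : V, ∃ u : V, v ∈ I → u ∈ Dstar ∧ dist (p u) (p v) ≤ 1 := by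
    intro v
    by_cases hv : v ∈ Dstar
    · exact ⟨v, fun _ => ⟨hv, by simp⟩⟩
    · obtain ⟨u, hu, hadj⟩ := hD v hv
      exact ⟨u, fun _ => ⟨hu, ((hp u v).1 hadj).2⟩⟩
  choose f hf using hdom
  set IF : Finset V := I.toFinite.toFinset with hIF
  set DF : Finset V := Dstar.toFinite.toFinset with hDF
  rw [Set.ncard_eq_toFinset_card I I.toFinite, Set.ncard_eq_toFinset_card Dstar Dstar.toFinite]
  apply Finset.card_le_mul_card_image_of_maps_to
    (f := f) (fun a ha => ?_) 5 (fun d hd => ?_)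
  · rw [Set.Finite.mem_toFinset]
    exact (hf a ((Set.Finite.mem_toFinset _).1 ha)).1
  · -- fiber over d has at most 5 elements
    set Fib : Finset V := {a ∈ IF | f a = d} with hFib
    -- transfer to ℂ
    set e : EuclideanSpace ℝ (Fin 2) ≃ₗᵢ[ℝ] ℂ :=
      (Complex.isometryOfOrthonormal (EuclideanSpace.basisFun (Fin 2) ℝ)).symm with he
    set g : V → ℂ := fun v => e (p v) - e (p d) with hg
    have hmemI : ∀ a ∈ Fib, a ∈ I := by
      intro a ha
      have := (Finset.mem_filter.1 ha).1
      exact (Set.Finite.mem_toFinset _).1 this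
    have hfd : ∀ a ∈ Fib, f a = d := fun a ha => (Finset.mem_filter.1 ha).2
    have hgdist : ∀ u v : V, dist (g u) (g v) = dist (p u) (p v) := by
      intro u v
      rw [hg]
      simp only [dist_sub_eq_dist_add_right]
      rw [show e (p u) - e (p d) + e (p d) = e (p u) by ring]
      exact e.dist_map _ _
    have hginj : Set.InjOn g Fib := by
      intro a ha b hb hab
      by_contra hne
      have := hfar a (hmemI a ha) b (hmemI b hb) hne
      rw [← hgdist, hab, dist_self] at this
      linarith
    have hcard : Fib.card = (Fib.image g).card := (Finset.card_image_of_injOn hginj).symm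
    rw [hcard]
    apply disk_packing
    · intro z hz
      obtain ⟨a, ha, rfl⟩ := Finset.mem_image.1 hz
      have h1 : dist (p (f a)) (p a) ≤ 1 := (hf a (hmemI a ha)).2
      rw [hfd a ha] at h1
      rw [hg]
      calc ‖e (p a) - e (p d)‖ = dist (e (p a)) (e (p d)) := (Complex.dist_eq _ _).symm
        _ = dist (p a) (p d) := e.dist_map _ _
        _ ≤ 1 := by rwa [dist_comm]
    · intro x hx y hy hxy
      obtain ⟨a, ha, rfl⟩ := Finset.mem_image.1 (by exact_mod_cast hx)
      obtain ⟨b, hb, rfl⟩ := Finset.mem_image.1 (by exact_mod_cast hy)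
      have hne : a ≠ b := fun h => hxy (by rw [h])
      rw [hgdist]
      exact hfar a (hmemI a ha) b (hmemI b hb) hne
end

section
/- Let G be a unit disk graph and let v be a vertex of G. Let k be the number of degree-1 neighbors of v and let ℓ be the number of degree-1 vertices of G at graph distance exactly 2 from v. Then k + ℓ ≤ 22. (Equivalently: if G is a (k,ℓ)-pendant unit disk graph, then k + ℓ ≤ 22.) -/
open Real Complex Finset

namespace KLP

/-- packing points with pairwise gaps > t in an interval -/
lemma linear_pack (t : ℝ) (ht : 0 < t) :
    ∀ (s : Finset ℝ) (lo hi : ℝ), s.Nonempty →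
    (∀ x ∈ s, lo ≤ x ∧ x ≤ hi) →
    (∀ x ∈ s, ∀ y ∈ s, x ≠ y → t < |x - y|) →
    ((s.card : ℝ) - 1) * t ≤ hi - lo := by
  intro s
  induction s using Finset.strongInduction with
  | _ s ih =>
    intro lo hi hne hmem hsep
    rcases eq_or_ne s.card 1 with h1 | h1
    · obtain ⟨x, hx⟩ := hne
      have := hmem _ hx
      rw [h1]
      simp only [Nat.cast_one, sub_self, zero_mul]
      linarith [this.1, this.2]
    · have hM := s.max'_mem hne
      set M := s.max' hne with hMdef
      have hcard : 2 ≤ s.card := by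
        have : 1 ≤ s.card := Finset.card_pos.mpr hne
        omega
      have hne' : (s.erase M).Nonempty := by
        rw [← Finset.card_pos, Finset.card_erase_of_mem hM]
        omega
      have hsub : ∀ x ∈ s.erase M, lo ≤ x ∧ x ≤ M - t := by
        intro x hx
        have hxs := Finset.mem_of_mem_erase hx
        have hxM : x ≠ M := Finset.ne_of_mem_erase hx
        have hle : x ≤ M := Finset.le_max' s x hxs
        have h2 := hsep x hxs M hM hxM
        rw [abs_sub_comm, _root_.abs_of_nonneg (show (0:ℝ) ≤ M - x by linarith)] at h2
        exact ⟨(hmem x hxs).1, by linarith⟩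
      have := ih (s.erase M) (Finset.erase_ssubset hM) lo (M - t) hne' hsub
        (fun x hx y hy hxy => hsep x (Finset.mem_of_mem_erase hx) y (Finset.mem_of_mem_erase hy) hxy)
      have hcarde : ((s.erase M).card : ℝ) = (s.card : ℝ) - 1 := by
        rw [Finset.card_erase_of_mem hM]
        have h3 : 1 ≤ s.card := by omega
        push_cast [Nat.cast_sub h3]
        ring
      rw [hcarde] at this
      have hMhi : M ≤ hi := (hmem M hM).2
      linarith

/-- sum of lengths of disjoint subintervals -/
lemma sum_intervals (g : ℝ → ℝ) :
    ∀ (B : Finset ℝ) (lo hi : ℝ), lo ≤ hi →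
    (∀ b ∈ B, lo ≤ b ∧ b < g b ∧ g b ≤ hi) →
    (∀ b₁ ∈ B, ∀ b₂ ∈ B, b₁ ≠ b₂ → g b₁ ≤ b₂ ∨ g b₂ ≤ b₁) →
    ∑ b ∈ B, (g b - b) ≤ hi - lo := by
  intro B
  induction B using Finset.strongInduction with
  | _ B ih =>
    intro lo hi hlohi hmem hdisj
    rcases B.eq_empty_or_nonempty with rfl | hne
    · simpa using hlohi
    · have hM := B.max'_mem hne
      set M := B.max' hne with hMdef
      have hsub : ∀ b ∈ B.erase M, lo ≤ b ∧ b < g b ∧ g b ≤ M := by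
        intro b hb
        have hbB := Finset.mem_of_mem_erase hb
        have hbM : b ≠ M := Finset.ne_of_mem_erase hb
        refine ⟨(hmem b hbB).1, (hmem b hbB).2.1, ?_⟩
        rcases hdisj b hbB M hM hbM with h | h
        · exact h
        · have h1 : b ≤ M := Finset.le_max' B b hbB
          have h2 := (hmem M hM).2.1
          linarith
      have := ih (B.erase M) (Finset.erase_ssubset hM) lo M ((hmem M hM).1)
        hsub
        (fun b₁ h1 b₂ h2 h12 => hdisj b₁ (Finset.mem_of_mem_erase h1) b₂ (Finset.mem_of_mem_erase h2) h12)
      have hsum : ∑ b ∈ B, (g b - b) = (∑ b ∈ B.erase M, (g b - b)) + (g M - M) :=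
        (Finset.sum_erase_add B _ hM).symm
      have h2 := (hmem M hM).2.2
      rw [hsum]
      linarith
lemma cos_lt_abs {t y : ℝ} (ht0 : 0 ≤ t) (htp : t ≤ π) (h : Real.cos y < Real.cos t) :
    t < |y| := by
  by_contra hc
  push_neg at hc
  have h1 : Real.cos t ≤ Real.cos |y| :=
    Real.cos_le_cos_of_nonneg_of_le_pi (abs_nonneg y) htp hc
  rw [Real.cos_abs] at h1
  linarith

lemma sqrt2_lt : Real.sqrt 2 < 1.4142136 := by
  rw [show (1.4142136:ℝ) = Real.sqrt (1.4142136^2) from (Real.sqrt_sq (by norm_num)).symm]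
  apply Real.sqrt_lt_sqrt <;> norm_num

lemma sqrt2_gt : 1.414213 < Real.sqrt 2 := by
  rw [show (1.414213:ℝ) = Real.sqrt (1.414213^2) from (Real.sqrt_sq (by norm_num)).symm]
  apply Real.sqrt_lt_sqrt <;> norm_num

lemma cos_915 : (3:ℝ)/4 < Real.cos (2*π/9) := by
  have h := Real.one_sub_sq_div_two_lt_cos (x := 2*π/9) (by positivity)
  have hp := Real.pi_lt_d2
  nlinarith [Real.pi_gt_three]

lemma cos_q2 : 5 * Real.sqrt 2 / 8 < Real.cos (2*π/13) := by
  set x : ℝ := 2*π/13 with hxd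
  have hx0 : 0 < x := by positivity
  have h1 : 1 - (x/2)^2/2 < Real.cos (x/2) := Real.one_sub_sq_div_two_lt_cos (by positivity)
  have h2 : Real.cos x = 2 * Real.cos (x/2)^2 - 1 := by
    have := Real.cos_two_mul (x/2)
    rw [show 2*(x/2) = x by ring] at this
    exact this
  have hxlt : x < 0.4833221 := by
    have := Real.pi_lt_d6
    rw [hxd]; linarith
  have hxgt : 0.483321 < x := by
    have := Real.pi_gt_d6
    rw [hxd]; linarith
  have hpos : (0:ℝ) < 1 - (x/2)^2/2 := by nlinarith
  have h3 : (1 - (x/2)^2/2)^2 < Real.cos (x/2)^2 := by nlinarith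
  have h4 : Real.cos x > 1 - x^2/2 + x^4/32 := by nlinarith
  have hx2 : x^2 < 0.2336003 := by nlinarith
  have hx2' : x^2 > 0.2335991 := by nlinarith
  have hx4 : x^4 > 0.0545685 := by nlinarith [sq_nonneg (x^2 - 0.2335991)]
  have hs := sqrt2_lt
  nlinarith

/-- real part of z * conj w equals cos of arg difference, for unit vectors -/
lemma re_mul_conj_eq_cos {z w : ℂ} (hz : ‖z‖ = 1) (hw : ‖w‖ = 1) :
    (z * (starRingEnd ℂ) w).re = Real.cos (z.arg - w.arg) := by
  have hz0 : z ≠ 0 := by intro h; rw [h] at hz; simp at hz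
  have hw0 : w ≠ 0 := by intro h; rw [h] at hw; simp at hw
  have haz : ‖z‖ = 1 := hz
  have haw : ‖w‖ = 1 := hw
  rw [Real.cos_sub, Complex.cos_arg hz0, Complex.cos_arg hw0, Complex.sin_arg, Complex.sin_arg,
    haz, haw]
  simp [Complex.mul_re]

/-- the real part of a unit vector is the cos of its arg -/
lemma re_eq_cos_arg {z : ℂ} (hz : ‖z‖ = 1) : z.re = Real.cos z.arg := by
  have hz0 : z ≠ 0 := by intro h; rw [h] at hz; simp at hz
  have haz : ‖z‖ = 1 := hz
  rw [Complex.cos_arg hz0, haz, div_one]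

/-- circle packing: unit vectors pairwise separated by angle > t -/
lemma circ_pack (s : Finset ℂ) (q t : ℝ) (ht0 : 0 < t) (htp : t ≤ π/2)
    (hq : q ≤ Real.cos t) (hunit : ∀ z ∈ s, ‖z‖ = 1)
    (hsep : ∀ z ∈ s, ∀ w ∈ s, z ≠ w → (z * (starRingEnd ℂ) w).re < q) :
    (s.card : ℝ) * t < 2 * π := by
  have hpi := Real.pi_gt_three
  rcases s.eq_empty_or_nonempty with rfl | hne
  · rw [Finset.card_empty]; push_cast; nlinarith
  obtain ⟨z₀, hz₀⟩ := hne
  set A : Finset ℝ := (s.erase z₀).image (fun z => (z * (starRingEnd ℂ) z₀).arg) with hA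
  have hu0 : ‖z₀‖ = 1 := hunit _ hz₀
  -- cos of differences of relative angles
  have hrel : ∀ z ∈ s.erase z₀, ∀ w ∈ s.erase z₀, z ≠ w →
      Real.cos ((z * (starRingEnd ℂ) z₀).arg - (w * (starRingEnd ℂ) z₀).arg) < q := by
    intro z hz w hw hzw
    have hzs := Finset.mem_of_mem_erase hz
    have hws := Finset.mem_of_mem_erase hw
    have h1 : ‖z * (starRingEnd ℂ) z₀‖ = 1 := by
      rw [norm_mul, RCLike.norm_conj, hunit _ hzs, hu0]; ring
    have h2 : ‖w * (starRingEnd ℂ) z₀‖ = 1 := by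
      rw [norm_mul, RCLike.norm_conj, hunit _ hws, hu0]; ring
    have h3 := re_mul_conj_eq_cos h1 h2
    have h4 : (z * (starRingEnd ℂ) z₀) * (starRingEnd ℂ) (w * (starRingEnd ℂ) z₀)
        = (z * (starRingEnd ℂ) w) * (z₀ * (starRingEnd ℂ) z₀) := by
      rw [map_mul, Complex.conj_conj]; ring
    have h5 : z₀ * (starRingEnd ℂ) z₀ = (1:ℂ) := by
      rw [Complex.mul_conj]
      norm_cast
      rw [Complex.normSq_eq_norm_sq, hu0]; norm_num
    rw [h4, h5, mul_one] at h3
    rw [← h3]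
    exact hsep z hzs w hws hzw
  -- relative angle of a single point
  have hsingle : ∀ z ∈ s.erase z₀, Real.cos ((z * (starRingEnd ℂ) z₀).arg) < q := by
    intro z hz
    have hzs := Finset.mem_of_mem_erase hz
    have h1 : ‖z * (starRingEnd ℂ) z₀‖ = 1 := by
      rw [norm_mul, RCLike.norm_conj, hunit _ hzs, hu0]; ring
    rw [← re_eq_cos_arg h1]
    exact hsep z hzs z₀ hz₀ (Finset.ne_of_mem_erase hz)
  -- injectivity
  have hinj : ∀ z ∈ s.erase z₀, ∀ w ∈ s.erase z₀,
      (z * (starRingEnd ℂ) z₀).arg = (w * (starRingEnd ℂ) z₀).arg → z = w := by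
    intro z hz w hw heq
    by_contra hzw
    have := hrel z hz w hw hzw
    rw [heq, sub_self, Real.cos_zero] at this
    linarith [Real.cos_le_one t]
  have hAcard : A.card = s.card - 1 := by
    rw [hA, Finset.card_image_of_injOn (fun z hz w hw => hinj z hz w hw),
      Finset.card_erase_of_mem hz₀]
  have hcard1 : 1 ≤ s.card := Finset.card_pos.mpr ⟨z₀, hz₀⟩
  -- properties of A
  have hmemA : ∀ a ∈ A, (-π < a ∧ a ≤ π) ∧ t < |a| := by
    intro a ha
    rw [hA, Finset.mem_image] at ha
    obtain ⟨z, hz, rfl⟩ := ha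
    refine ⟨⟨Complex.neg_pi_lt_arg _, Complex.arg_le_pi _⟩, ?_⟩
    exact cos_lt_abs (le_of_lt ht0) (by linarith) (lt_of_lt_of_le (hsingle z hz) hq)
  have hsepA : ∀ a ∈ A, ∀ b ∈ A, a ≠ b → t < |a - b| ∧ |a - b| < 2*π - t := by
    intro a ha b hb hab
    rw [hA, Finset.mem_image] at ha hb
    obtain ⟨z, hz, rfl⟩ := ha
    obtain ⟨w, hw, rfl⟩ := hb
    have hzw : z ≠ w := by rintro rfl; exact hab rfl
    have hc := lt_of_lt_of_le (hrel z hz w hw hzw) hq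
    constructor
    · exact cos_lt_abs (le_of_lt ht0) (by linarith) hc
    · by_contra hcon
      push_neg at hcon
      have hb1 := (hmemA _ (Finset.mem_image_of_mem _ hz)).1
      have hb2 := (hmemA _ (Finset.mem_image_of_mem _ hw)).1
      set d := (z * (starRingEnd ℂ) z₀).arg - (w * (starRingEnd ℂ) z₀).arg with hd
      have habs : |d| < 2*π := by
        rw [abs_lt]; constructor <;> [linarith [hb1.1, hb2.2]; linarith [hb1.2, hb2.1]]
      have h0 : 0 ≤ 2*π - |d| := by linarith
      have h1 : 2*π - |d| ≤ t := by linarith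
      have : Real.cos t ≤ Real.cos (2*π - |d|) :=
        Real.cos_le_cos_of_nonneg_of_le_pi h0 (by linarith) h1
      rw [Real.cos_two_pi_sub, Real.cos_abs] at this
      linarith
  -- split into positive and negative parts
  set P : Finset ℝ := A.filter (fun a => 0 < a) with hP
  set N : Finset ℝ := A.filter (fun a => a < 0) with hN
  have hsplit : A.card = P.card + N.card := by
    rw [hP, hN]
    rw [← Finset.card_filter_add_card_filter_not (p := fun a => 0 < a)]
    congr 1
    apply Finset.card_bij (fun a _ => a)
    · intro a ha
      simp only [Finset.mem_filter, not_lt] at ha ⊢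
      refine ⟨ha.1, ?_⟩
      rcases lt_or_eq_of_le ha.2 with h | h
      · exact h
      · exfalso; have := (hmemA a ha.1).2; rw [h] at this; simp at this; linarith
    · intro a ha b hb h; exact h
    · intro b hb
      simp only [Finset.mem_filter] at hb ⊢
      exact ⟨b, ⟨hb.1, by linarith [hb.2]⟩, rfl⟩
  have hPbound : ∀ a ∈ P, t < a ∧ a ≤ π := by
    intro a ha
    rw [hP, Finset.mem_filter] at ha
    have h1 := (hmemA a ha.1).2
    have h2 := (hmemA a ha.1).1.2
    rw [abs_of_pos ha.2] at h1
    exact ⟨h1, h2⟩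
  have hNbound : ∀ a ∈ N, -π ≤ a ∧ a < -t := by
    intro a ha
    rw [hN, Finset.mem_filter] at ha
    have h1 := (hmemA a ha.1).2
    have h2 := (hmemA a ha.1).1.1
    rw [abs_of_neg ha.2] at h1
    exact ⟨le_of_lt h2, by linarith⟩
  have hPbound' : ∀ a ∈ P, t ≤ a ∧ a ≤ π := fun a ha => ⟨(hPbound a ha).1.le, (hPbound a ha).2⟩
  have hNbound' : ∀ a ∈ N, -π ≤ a ∧ a ≤ -t := fun a ha => ⟨(hNbound a ha).1, (hNbound a ha).2.le⟩
  have hsepP : ∀ x ∈ P, ∀ y ∈ P, x ≠ y → t < |x - y| := by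
    intro x hx y hy hxy
    exact (hsepA x (Finset.mem_of_mem_filter x hx) y (Finset.mem_of_mem_filter y hy) hxy).1
  have hsepN : ∀ x ∈ N, ∀ y ∈ N, x ≠ y → t < |x - y| := by
    intro x hx y hy hxy
    exact (hsepA x (Finset.mem_of_mem_filter x hx) y (Finset.mem_of_mem_filter y hy) hxy).1
  rcases P.eq_empty_or_nonempty with hPe | hPne
  · rcases N.eq_empty_or_nonempty with hNe | hNne
    · have : A.card = 0 := by rw [hsplit, hPe, hNe]; simp
      have : s.card = 1 := by omega
      rw [this]; push_cast; nlinarith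
    · have h1 := linear_pack t ht0 N (-π) (-t) hNne hNbound' hsepN
      have : A.card = N.card := by rw [hsplit, hPe]; simp
      have hsc : (s.card : ℝ) = (N.card : ℝ) + 1 := by
        rw [← this, hAcard]; push_cast [Nat.cast_sub hcard1]; ring
      rw [hsc]
      nlinarith [Finset.card_pos.mpr hNne]
  · rcases N.eq_empty_or_nonempty with hNe | hNne
    · have h1 := linear_pack t ht0 P t π hPne hPbound' hsepP
      have : A.card = P.card := by rw [hsplit, hNe]; simp
      have hsc : (s.card : ℝ) = (P.card : ℝ) + 1 := by
        rw [← this, hAcard]; push_cast [Nat.cast_sub hcard1]; ring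
      rw [hsc]
      nlinarith [Finset.card_pos.mpr hPne]
    · -- both nonempty
      have h1 := linear_pack t ht0 P (P.min' hPne) (P.max' hPne) hPne
        (fun x hx => ⟨Finset.min'_le P x hx, Finset.le_max' P x hx⟩) hsepP
      have h2 := linear_pack t ht0 N (N.min' hNne) (N.max' hNne) hNne
        (fun x hx => ⟨Finset.min'_le N x hx, Finset.le_max' N x hx⟩) hsepN
      have hminP := hPbound _ (P.min'_mem hPne)
      have hmaxN := hNbound _ (N.max'_mem hNne)
      have hmaxP := hPbound _ (P.max'_mem hPne)
      have hminN := hNbound _ (N.min'_mem hNne)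
      have hcross : P.max' hPne - N.min' hNne < 2*π - t := by
        have hne' : P.max' hPne ≠ N.min' hNne := by
          intro h
          have := hminN.2
          have := hmaxP.1
          rw [h] at this; linarith
        have := (hsepA _ (Finset.mem_of_mem_filter _ (P.max'_mem hPne))
          _ (Finset.mem_of_mem_filter _ (N.min'_mem hNne)) hne').2
        calc P.max' hPne - N.min' hNne ≤ |P.max' hPne - N.min' hNne| := le_abs_self _
          _ < 2*π - t := this
      have hgap : 2*t < P.min' hPne - N.max' hNne := by
        have := hminP.1; have := hmaxN.2
        linarith
      have hsc : (s.card : ℝ) = (P.card : ℝ) + (N.card : ℝ) + 1 := by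
        have : s.card = P.card + N.card + 1 := by omega
        rw [this]; push_cast; ring
      rw [hsc]
      nlinarith
/-! fence machinery -/

lemma window {y : ℝ} (h0 : 0 < y) (h2 : y < 2*π) (hc : Real.cos y < 1/2) :
    π/3 < y ∧ y < 2*π - π/3 := by
  rw [← Real.cos_pi_div_three] at hc
  have hpi := Real.pi_pos
  constructor
  · have := cos_lt_abs (by positivity) (by linarith) hc
    rw [abs_of_pos h0] at this; exact this
  · by_contra hcon
    push_neg at hcon
    have hle : 2*π - y ≤ π/3 := by linarith
    have h0' : 0 ≤ 2*π - y := by linarith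
    have := Real.cos_le_cos_of_nonneg_of_le_pi h0' (by linarith) hle
    rw [Real.cos_two_pi_sub] at this
    linarith

section Fence

variable (B : Finset ℝ) (hBne : B.Nonempty)

noncomputable def nxt (b : ℝ) : ℝ :=
  if h : (B.filter (fun c => b < c)).Nonempty then (B.filter (fun c => b < c)).min' h
  else B.min' hBne + 2*π

noncomputable def Wd (b : ℝ) : ℝ := nxt B hBne b - b

noncomputable def fce (x : ℝ) : ℝ :=
  if h : (B.filter (fun c => c ≤ x)).Nonempty then (B.filter (fun c => c ≤ x)).max' h
  else B.max' hBne

noncomputable def ofs (x : ℝ) : ℝ :=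
  if (B.filter (fun c => c ≤ x)).Nonempty then x - fce B hBne x else x - fce B hBne x + 2*π

variable (hBmem : ∀ b ∈ B, -π < b ∧ b ≤ π)

include hBmem

omit hBmem in
lemma fce_mem (x : ℝ) : fce B hBne x ∈ B := by
  unfold fce
  split
  · next h => exact Finset.mem_of_mem_filter _ ((B.filter (fun c => c ≤ x)).max'_mem h)
  · exact B.max'_mem hBne

omit hBmem in
lemma ofs_shift (x : ℝ) : ∃ m : ℤ, ofs B hBne x = x - fce B hBne x + 2*π*m := by
  unfold ofs
  split
  · exact ⟨0, by push_cast; ring⟩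
  · exact ⟨1, by push_cast; ring⟩

/-- main bounds on the offset of a point all of whose cos-distances to B are < 1/2 -/
lemma ofs_bounds (x : ℝ) (hx : -π < x ∧ x ≤ π)
    (hsep : ∀ b ∈ B, Real.cos (x - b) < 1/2) :
    π/3 < ofs B hBne x ∧ ofs B hBne x < Wd B hBne (fce B hBne x) - π/3 := by
  have hpi := Real.pi_pos
  have hfm := fce_mem B hBne x
  have hfb := hBmem _ hfm
  -- the offset value, case split on branch
  by_cases hbelow : (B.filter (fun c => c ≤ x)).Nonempty
  · -- fce = max of below, ofs = x - fce
    have hfce : fce B hBne x = (B.filter (fun c => c ≤ x)).max' hbelow := by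
      unfold fce; rw [dif_pos hbelow]
    have hofs : ofs B hBne x = x - fce B hBne x := by
      unfold ofs; rw [if_pos hbelow]
    have hfle : fce B hBne x ≤ x := by
      rw [hfce]
      exact (Finset.mem_filter.mp ((B.filter (fun c => c ≤ x)).max'_mem hbelow)).2
    have hne : fce B hBne x ≠ x := by
      intro h
      have := hsep _ hfm
      rw [h] at this; simp at this; linarith
    have h0 : 0 < ofs B hBne x := by rw [hofs]; cases lt_or_eq_of_le hfle with
      | inl h => linarith
      | inr h => exact absurd h hne
    have h2 : ofs B hBne x < 2*π := by rw [hofs]; linarith [hfb.1, hx.2]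
    have hcos : Real.cos (ofs B hBne x) < 1/2 := by
      rw [hofs]; exact hsep _ hfm
    have hwin := window h0 h2 hcos
    refine ⟨hwin.1, ?_⟩
    -- now the upper part : nxt (fce x) - x > π/3  (as  Wd - ofs = nxt - x here)
    have hW : Wd B hBne (fce B hBne x) - ofs B hBne x = nxt B hBne (fce B hBne x) - x := by
      unfold Wd; rw [hofs]; ring
    have hkey : π/3 < nxt B hBne (fce B hBne x) - x := by
      unfold nxt
      split
      · next hab =>
        set b' := (B.filter (fun c => fce B hBne x < c)).min' hab with hb'
        have hb'mem := (B.filter (fun c => fce B hBne x < c)).min'_mem hab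
        have hb'B := Finset.mem_of_mem_filter _ hb'mem
        have hb'gt : x < b' := by
          by_contra hcon
          push_neg at hcon
          -- b' ≤ x, so b' ∈ below-filter, so b' ≤ fce, contradiction with fce < b'
          have h1 : b' ∈ B.filter (fun c => c ≤ x) := Finset.mem_filter.mpr ⟨hb'B, hcon⟩
          have h2 : b' ≤ fce B hBne x := by
            rw [hfce]; exact Finset.le_max' _ _ h1
          have h3 : fce B hBne x < b' := (Finset.mem_filter.mp hb'mem).2
          linarith
        have hd0 : 0 < b' - x := by linarith
        have hd2 : b' - x < 2*π := by linarith [(hBmem _ hb'B).2, hx.1]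
        have : Real.cos (b' - x) < 1/2 := by
          rw [show b' - x = -(x - b') by ring, Real.cos_neg]
          exact hsep _ hb'B
        have := (window hd0 hd2 this).1
        linarith
      · next hab =>
        -- no element above fce x; nxt = min + 2π
        have hmin := B.min'_mem hBne
        have hd0 : 0 < B.min' hBne + 2*π - x := by linarith [(hBmem _ hmin).1, hx.2]
        have hd2 : B.min' hBne + 2*π - x < 2*π := by
          -- need min < x… min ≤ fce ≤ x and fce ≠ x
          have h1 : B.min' hBne ≤ fce B hBne x := Finset.min'_le _ _ hfm
          cases lt_or_eq_of_le hfle with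
          | inl h => linarith
          | inr h => exact absurd h hne
        have hcos2 : Real.cos (B.min' hBne + 2*π - x) < 1/2 := by
          have h1 := hsep _ hmin
          rw [show B.min' hBne + 2*π - x = -(x - B.min' hBne) + (1:ℤ)*(2*π) by push_cast; ring,
            Real.cos_add_int_mul_two_pi, Real.cos_neg]
          exact h1
        have := (window hd0 hd2 hcos2).1
        linarith
    linarith [hW, hkey]
  · -- wrap case : no element of B is ≤ x, fce = max B, ofs = x - max + 2π
    have hfce : fce B hBne x = B.max' hBne := by unfold fce; rw [dif_neg hbelow]
    have hofs : ofs B hBne x = x - fce B hBne x + 2*π := by unfold ofs; rw [if_neg hbelow]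
    have hmax := B.max'_mem hBne
    have hxlt : x < B.max' hBne := by
      by_contra hcon
      push_neg at hcon
      exact hbelow ⟨B.max' hBne, Finset.mem_filter.mpr ⟨hmax, hcon⟩⟩
    have h0 : 0 < ofs B hBne x := by
      rw [hofs, hfce]; linarith [(hBmem _ hmax).2, hx.1]
    have h2 : ofs B hBne x < 2*π := by rw [hofs, hfce]; linarith
    have hcos : Real.cos (ofs B hBne x) < 1/2 := by
      rw [hofs, show x - fce B hBne x + 2*π = (x - fce B hBne x) + (1:ℤ)*(2*π) by push_cast; ring,
        Real.cos_add_int_mul_two_pi]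
      exact hsep _ hfm
    have hwin := window h0 h2 hcos
    refine ⟨hwin.1, ?_⟩
    -- above-filter of max B is empty, so nxt (max B) = min B + 2π
    have habove : ¬ (B.filter (fun c => B.max' hBne < c)).Nonempty := by
      intro h
      obtain ⟨c, hc⟩ := h
      rw [Finset.mem_filter] at hc
      exact absurd (Finset.le_max' _ _ hc.1) (not_le.mpr hc.2)
    have hnxt : nxt B hBne (fce B hBne x) = B.min' hBne + 2*π := by
      rw [hfce]; unfold nxt; rw [dif_neg habove]
    have hmin := B.min'_mem hBne
    have hxmin : x < B.min' hBne := by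
      by_contra hcon
      push_neg at hcon
      exact hbelow ⟨B.min' hBne, Finset.mem_filter.mpr ⟨hmin, hcon⟩⟩
    have hd0 : 0 < B.min' hBne - x := by linarith
    have hd2 : B.min' hBne - x < 2*π := by linarith [(hBmem _ hmin).2, hx.1]
    have hcos2 : Real.cos (B.min' hBne - x) < 1/2 := by
      have h1 := hsep _ hmin
      rw [show B.min' hBne - x = -(x - B.min' hBne) by ring, Real.cos_neg]
      exact h1
    have hk := (window hd0 hd2 hcos2).1
    unfold Wd
    rw [hnxt, hofs, hfce]
    linarith

/-- every arc has width > π/3 provided B is pairwise separated -/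
lemma Wd_gt (hBcard : 2 ≤ B.card)
    (hBsep : ∀ b ∈ B, ∀ b' ∈ B, b ≠ b' → Real.cos (b - b') < 1/2) (b : ℝ) (hb : b ∈ B) :
    π/3 < Wd B hBne b := by
  have hpi := Real.pi_pos
  unfold Wd nxt
  split
  · next hab =>
    set b' := (B.filter (fun c => b < c)).min' hab with hb'
    have hb'mem := (B.filter (fun c => b < c)).min'_mem hab
    have hb'B := Finset.mem_of_mem_filter _ hb'mem
    have hlt : b < b' := (Finset.mem_filter.mp hb'mem).2
    have hd2 : b' - b < 2*π := by linarith [(hBmem _ hb'B).2, (hBmem _ hb).1]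
    have hcos : Real.cos (b' - b) < 1/2 := hBsep b' hb'B b hb (by intro h; rw [h] at hlt; linarith)
    have := (window (by linarith) hd2 hcos).1
    linarith
  · next hab =>
    -- b is the max
    have hmin := B.min'_mem hBne
    have hbmax : ∀ c ∈ B, c ≤ b := by
      intro c hc
      by_contra hcon
      exact hab ⟨c, Finset.mem_filter.mpr ⟨hc, not_le.mp hcon⟩⟩
    have hminb : B.min' hBne ≤ b := hbmax _ hmin
    have hne : B.min' hBne ≠ b := by
      intro h
      obtain ⟨a, ha, c, hc, hac⟩ := Finset.one_lt_card.mp hBcard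
      have ea : a = b := le_antisymm (hbmax a ha) (h ▸ Finset.min'_le B a ha)
      have ec : c = b := le_antisymm (hbmax c hc) (h ▸ Finset.min'_le B c hc)
      exact hac (ea.trans ec.symm)
    have hd0 : 0 < B.min' hBne + 2*π - b := by linarith [(hBmem _ hmin).1, (hBmem _ hb).2]
    have hd2 : B.min' hBne + 2*π - b < 2*π := by cases lt_or_eq_of_le hminb with
      | inl h => linarith
      | inr h => exact absurd h hne
    have hcos : Real.cos (B.min' hBne + 2*π - b) < 1/2 := by
      rw [show B.min' hBne + 2*π - b = (B.min' hBne - b) + (1:ℤ)*(2*π) by push_cast; ring,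
        Real.cos_add_int_mul_two_pi]
      exact hBsep _ hmin _ hb hne
    have := (window hd0 hd2 hcos).1
    linarith

omit hBmem in
/-- total width at most 2π -/
lemma Wd_sum (hBmem : ∀ b ∈ B, -π < b ∧ b ≤ π) : ∑ b ∈ B, Wd B hBne b ≤ 2*π := by
  have hpi := Real.pi_pos
  have hmin := B.min'_mem hBne
  have h := sum_intervals (nxt B hBne) B (B.min' hBne) (B.min' hBne + 2*π) (by linarith)
    ?_ ?_
  · calc ∑ b ∈ B, Wd B hBne b = ∑ b ∈ B, (nxt B hBne b - b) := rfl
      _ ≤ (B.min' hBne + 2*π) - B.min' hBne := h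
      _ = 2*π := by ring
  · intro b hb
    refine ⟨Finset.min'_le _ _ hb, ?_, ?_⟩
    · unfold nxt; split
      · next hab => exact (Finset.mem_filter.mp ((B.filter _).min'_mem hab)).2
      · linarith [(hBmem _ hb).2, (hBmem _ hmin).1]
    · unfold nxt; split
      · next hab =>
        have h1 := Finset.mem_of_mem_filter _ ((B.filter _).min'_mem hab)
        linarith [(hBmem _ h1).2, (hBmem _ hmin).1]
      · linarith
  · intro b₁ h1 b₂ h2 h12
    rcases lt_or_gt_of_ne h12 with h | h
    · left
      unfold nxt; split
      · next hab => exact Finset.min'_le _ _ (Finset.mem_filter.mpr ⟨h2, h⟩)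
      · next hab => exact absurd ⟨b₂, Finset.mem_filter.mpr ⟨h2, h⟩⟩ hab
    · right
      unfold nxt; split
      · next hab => exact Finset.min'_le _ _ (Finset.mem_filter.mpr ⟨h1, h⟩)
      · next hab => exact absurd ⟨b₁, Finset.mem_filter.mpr ⟨h1, h⟩⟩ hab

end Fence
/-! endgame -/

lemma unit_arg_inj {z w : ℂ} (hz : ‖z‖ = 1) (hw : ‖w‖ = 1) (h : z.arg = w.arg) : z = w :=
  Complex.ext_norm_arg (by rw [hz, hw]) h

lemma small_angle {y : ℝ} (hy : |y| ≤ π) (hc : Real.cos (π/4) ≤ Real.cos y) : |y| ≤ π/4 := by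
  by_contra hcon
  push_neg at hcon
  have := Real.cos_lt_cos_of_nonneg_of_le_pi (by positivity) hy hcon
  rw [Real.cos_abs] at this
  linarith

section Endgame

variable (I : Finset ℂ)
  (hIunit : ∀ z ∈ I, ‖z‖ = 1)
  (hIsep : ∀ z ∈ I, ∀ w ∈ I, z ≠ w → (z * (starRingEnd ℂ) w).re < 1/2)

include hIunit hIsep in
/-- B facts -/
lemma Bfacts (hIne : I.Nonempty) :
    ∃ B : Finset ℝ, B = I.image Complex.arg ∧ B.Nonempty ∧ B.card = I.card ∧
      (∀ b ∈ B, -π < b ∧ b ≤ π) ∧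
      (∀ b ∈ B, ∀ b' ∈ B, b ≠ b' → Real.cos (b - b') < 1/2) := by
  refine ⟨I.image Complex.arg, rfl, hIne.image _, ?_, ?_, ?_⟩
  · apply Finset.card_image_of_injOn
    intro z hz w hw h
    exact unit_arg_inj (hIunit z hz) (hIunit w hw) h
  · intro b hb
    rw [Finset.mem_image] at hb
    obtain ⟨z, hz, rfl⟩ := hb
    exact ⟨Complex.neg_pi_lt_arg _, Complex.arg_le_pi _⟩
  · intro b hb b' hb' hne
    rw [Finset.mem_image] at hb hb'
    obtain ⟨z, hz, rfl⟩ := hb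
    obtain ⟨w, hw, rfl⟩ := hb'
    have hzw : z ≠ w := by rintro rfl; exact hne rfl
    rw [← re_mul_conj_eq_cos (hIunit z hz) (hIunit w hw)]
    exact hIsep z hz w hw hzw

include hIunit hIsep in
/-- if I has ≥ 5 elements, no unit vector can be 60°-separated from all of I -/
lemma no_hub (hI5 : 5 ≤ I.card) (h : ℂ) (hh : ‖h‖ = 1)
    (hsep : ∀ i ∈ I, (h * (starRingEnd ℂ) i).re < 1/2) : False := by
  have hpi := Real.pi_pos
  have hIne : I.Nonempty := Finset.card_pos.mp (by omega)
  obtain ⟨B, hBdef, hBne, hBcard, hBmem, hBsep⟩ := Bfacts I hIunit hIsep hIne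
  have hBcard2 : 2 ≤ B.card := by omega
  have hhsep : ∀ b ∈ B, Real.cos (h.arg - b) < 1/2 := by
    intro b hb
    rw [hBdef, Finset.mem_image] at hb
    obtain ⟨i, hi, rfl⟩ := hb
    rw [← re_mul_conj_eq_cos hh (hIunit i hi)]
    exact hsep i hi
  have hob := ofs_bounds B hBne hBmem h.arg ⟨Complex.neg_pi_lt_arg _, Complex.arg_le_pi _⟩ hhsep
  set b₀ := fce B hBne h.arg with hb₀
  have hb₀B : b₀ ∈ B := fce_mem B hBne h.arg
  have hWb₀ : 2*π/3 < Wd B hBne b₀ := by linarith [hob.1, hob.2]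
  have hsum := Wd_sum B hBne hBmem
  have hsplit : ∑ b ∈ B, Wd B hBne b
      = Wd B hBne b₀ + ∑ b ∈ B.erase b₀, Wd B hBne b := by
    rw [← Finset.add_sum_erase B _ hb₀B]
  have hrest : ((B.erase b₀).card : ℝ) * (π/3) ≤ ∑ b ∈ B.erase b₀, Wd B hBne b := by
    have : ∀ b ∈ B.erase b₀, π/3 ≤ Wd B hBne b := fun b hb =>
      (Wd_gt B hBne hBmem hBcard2 hBsep b (Finset.mem_of_mem_erase hb)).le
    calc ((B.erase b₀).card : ℝ) * (π/3) = ∑ _b ∈ B.erase b₀, (π/3) := by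
          rw [Finset.sum_const, nsmul_eq_mul]
      _ ≤ _ := Finset.sum_le_sum this
  have hc : ((B.erase b₀).card : ℝ) = (B.card : ℝ) - 1 := by
    rw [Finset.card_erase_of_mem hb₀B]
    have : 1 ≤ B.card := by omega
    push_cast [Nat.cast_sub this]; ring
  rw [hc] at hrest
  have hk : (5:ℝ) ≤ (B.card : ℝ) := by exact_mod_cast (by omega : 5 ≤ B.card)
  nlinarith

set_option maxHeartbeats 1000000 in
include hIunit hIsep in
lemma endgame (R : Finset ℂ)
    (hI3 : 3 ≤ I.card)
    (hRunit : ∀ z ∈ R, ‖z‖ = 1)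
    (hRsep : ∀ z ∈ R, ∀ w ∈ R, z ≠ w → (z * (starRingEnd ℂ) w).re < 5*Real.sqrt 2/8)
    (hhub : ∀ r ∈ R, ∃ h : ℂ, ‖h‖ = 1 ∧ Real.sqrt 2/2 ≤ (r * (starRingEnd ℂ) h).re ∧
      ∀ i ∈ I, (h * (starRingEnd ℂ) i).re < 1/2) :
    (R.card : ℝ) ≤ 281/12 - (51/12) * I.card := by
  classical
  have hpi := Real.pi_pos
  have hIne : I.Nonempty := Finset.card_pos.mp (by omega)
  obtain ⟨B, hBdef, hBne, hBcard, hBmem, hBsep⟩ := Bfacts I hIunit hIsep hIne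
  have hBcard2 : 2 ≤ B.card := by omega
  -- I.card ≤ 5
  have hk5 : I.card ≤ 5 := by
    by_contra hcon
    push_neg at hcon
    -- pick 5 elements?? easier: any hub? no... use circ_pack on I with t = π/3
    have := circ_pack I (1/2) (π/3) (by positivity) (by linarith) (by rw [Real.cos_pi_div_three])
      hIunit hIsep
    have h6 : (6:ℝ) ≤ (I.card:ℝ) := by exact_mod_cast (by omega : 6 ≤ I.card)
    nlinarith
  -- hub function
  set P : ℂ → ℂ → Prop := fun r h => ‖h‖ = 1 ∧ Real.sqrt 2/2 ≤ (r * (starRingEnd ℂ) h).re ∧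
      ∀ i ∈ I, (h * (starRingEnd ℂ) i).re < 1/2 with hPdef
  set hubf : ℂ → ℂ := fun r => if hr : ∃ h, P r h then hr.choose else 1 with hhubf
  have hP : ∀ r ∈ R, P r (hubf r) := by
    intro r hr
    have : ∃ h, P r h := hhub r hr
    simp only [hhubf, dif_pos this]
    exact this.choose_spec
  -- hub arg separated from B
  have hhsepB : ∀ r ∈ R, ∀ b ∈ B, Real.cos ((hubf r).arg - b) < 1/2 := by
    intro r hr b hb
    rw [hBdef, Finset.mem_image] at hb
    obtain ⟨i, hi, rfl⟩ := hb
    rw [← re_mul_conj_eq_cos (hP r hr).1 (hIunit i hi)]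
    exact (hP r hr).2.2 i hi
  have hob : ∀ r ∈ R, π/3 < ofs B hBne ((hubf r).arg) ∧
      ofs B hBne ((hubf r).arg) < Wd B hBne (fce B hBne ((hubf r).arg)) - π/3 := by
    intro r hr
    exact ofs_bounds B hBne hBmem _ ⟨Complex.neg_pi_lt_arg _, Complex.arg_le_pi _⟩
      (hhsepB r hr)
  set φ : ℂ → ℝ := fun r => fce B hBne ((hubf r).arg) with hφ
  set Host : Finset ℝ := R.image φ with hHost
  have hHostB : Host ⊆ B := by
    intro b hb
    rw [hHost, Finset.mem_image] at hb
    obtain ⟨r, hr, rfl⟩ := hb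
    exact fce_mem B hBne _
  -- drep: normalized angle from hub to r
  set drep : ℂ → ℝ := fun r => r.arg - (hubf r).arg +
      (if π < r.arg - (hubf r).arg then -(2*π) else if r.arg - (hubf r).arg < -π then 2*π else 0)
    with hdrep
  have hdrep_spec : ∀ r ∈ R, |drep r| ≤ π/4 ∧ ∃ m : ℤ, drep r = r.arg - (hubf r).arg + 2*π*m := by
    intro r hr
    have hcos : Real.cos (π/4) ≤ Real.cos (r.arg - (hubf r).arg) := by
      rw [← re_mul_conj_eq_cos (hRunit r hr) (hP r hr).1, Real.cos_pi_div_four]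
      exact (hP r hr).2.1
    have hb1 : -π < r.arg := Complex.neg_pi_lt_arg _
    have hb2 : r.arg ≤ π := Complex.arg_le_pi _
    have hb3 : -π < (hubf r).arg := Complex.neg_pi_lt_arg _
    have hb4 : (hubf r).arg ≤ π := Complex.arg_le_pi _
    constructor
    · rw [hdrep]
      simp only
      split
      · next hgt =>
        have : |r.arg - (hubf r).arg + -(2*π)| ≤ π := by rw [abs_le]; constructor <;> linarith
        have hcc : Real.cos (π/4) ≤ Real.cos (r.arg - (hubf r).arg + -(2*π)) := by
          rw [show r.arg - (hubf r).arg + -(2*π) = (r.arg - (hubf r).arg) + (-1:ℤ)*(2*π) by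
            push_cast; ring, Real.cos_add_int_mul_two_pi]
          exact hcos
        exact small_angle this hcc
      · split
        · next hlt =>
          have : |r.arg - (hubf r).arg + 2*π| ≤ π := by rw [abs_le]; constructor <;> linarith
          have hcc : Real.cos (π/4) ≤ Real.cos (r.arg - (hubf r).arg + 2*π) := by
            rw [show r.arg - (hubf r).arg + 2*π = (r.arg - (hubf r).arg) + (1:ℤ)*(2*π) by
              push_cast; ring, Real.cos_add_int_mul_two_pi]
            exact hcos
          exact small_angle this hcc
        · next h1 h2 =>
          push_neg at h1 h2
          have : |r.arg - (hubf r).arg + 0| ≤ π := by rw [abs_le]; constructor <;> linarith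
          rw [add_zero] at this
          have := small_angle this hcos
          rw [add_zero]
          exact this
    · rw [hdrep]
      simp only
      split
      · exact ⟨-1, by push_cast; ring⟩
      · split
        · exact ⟨1, by push_cast; ring⟩
        · exact ⟨0, by push_cast; ring⟩
  set xval : ℂ → ℝ := fun r => ofs B hBne ((hubf r).arg) + drep r with hxval
  have hxval_shift : ∀ r ∈ R, ∃ m : ℤ, xval r = r.arg - φ r + 2*π*m := by
    intro r hr
    obtain ⟨m₁, hm₁⟩ := ofs_shift B hBne ((hubf r).arg)
    obtain ⟨_, m₂, hm₂⟩ := hdrep_spec r hr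
    exact ⟨m₁ + m₂, by rw [hxval]; simp only; rw [hm₁, hm₂, hφ]; push_cast; ring⟩
  have hxval_mem : ∀ r ∈ R, π/12 ≤ xval r ∧ xval r ≤ Wd B hBne (φ r) - π/12 := by
    intro r hr
    have h1 := (hob r hr)
    have h2 := (hdrep_spec r hr).1
    rw [abs_le] at h2
    have hx : xval r = ofs B hBne ((hubf r).arg) + drep r := rfl
    have hp : φ r = fce B hBne ((hubf r).arg) := rfl
    constructor
    · rw [hx]; linarith [h1.1, h2.1]
    · rw [hx, hp]; linarith [h1.2, h2.2]
  -- pairwise separation of xval within a fiber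
  have hxsep : ∀ b : ℝ, ∀ r ∈ R.filter (fun r => φ r = b), ∀ s ∈ R.filter (fun r => φ r = b),
      r ≠ s → 2*π/13 < |xval r - xval s| := by
    intro b r hr s hs hrs
    rw [Finset.mem_filter] at hr hs
    obtain ⟨m₁, hm₁⟩ := hxval_shift r hr.1
    obtain ⟨m₂, hm₂⟩ := hxval_shift s hs.1
    have hdiff : xval r - xval s = (r.arg - s.arg) + ((m₁ - m₂ : ℤ) : ℝ) * (2*π) := by
      rw [hm₁, hm₂, hr.2, hs.2]; push_cast; ring
    have hcosd : Real.cos (xval r - xval s) < Real.cos (2*π/13) := by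
      rw [hdiff, Real.cos_add_int_mul_two_pi,
        ← re_mul_conj_eq_cos (hRunit r hr.1) (hRunit s hs.1)]
      exact lt_trans (hRsep r hr.1 s hs.1 hrs) cos_q2
    exact cos_lt_abs (by positivity) (by linarith) hcosd
  -- per-fiber cardinality bound
  have hfiber : ∀ b ∈ Host,
      ((R.filter (fun r => φ r = b)).card : ℝ) - 1 ≤ (Wd B hBne b - π/6) * (13/(2*π)) := by
    intro b hb
    set Sb := R.filter (fun r => φ r = b) with hSb
    have hSbne : Sb.Nonempty := by
      rw [hHost, Finset.mem_image] at hb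
      obtain ⟨r, hr, hrb⟩ := hb
      exact ⟨r, Finset.mem_filter.mpr ⟨hr, hrb⟩⟩
    set X := Sb.image xval with hX
    have hXcard : X.card = Sb.card := by
      apply Finset.card_image_of_injOn
      intro r hr s hs h
      by_contra hrs
      have := hxsep b r hr s hs hrs
      rw [h, sub_self, abs_zero] at this
      linarith
    have hXne : X.Nonempty := hSbne.image _
    have hlp := linear_pack (2*π/13) (by positivity) X (π/12) (Wd B hBne b - π/12) hXne ?_ ?_
    · rw [hXcard] at hlp
      have h2pi : (0:ℝ) < 2*π := by positivity
      have hpne := Real.pi_ne_zero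
      have hthis : ((Sb.card:ℝ) - 1) * (2*π/13) ≤ Wd B hBne b - π/6 := by linarith
      calc ((Sb.card:ℝ) - 1) = ((Sb.card:ℝ) - 1) * (2*π/13) * (13/(2*π)) := by
            field_simp
        _ ≤ (Wd B hBne b - π/6) * (13/(2*π)) := by
            apply mul_le_mul_of_nonneg_right hthis
            positivity
    · intro x hx
      rw [hX, Finset.mem_image] at hx
      obtain ⟨r, hr, rfl⟩ := hx
      have := hxval_mem r (Finset.mem_of_mem_filter r hr)
      have hfil := (Finset.mem_filter.mp hr).2
      rw [hfil] at this
      exact this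
    · intro x hx y hy hxy
      rw [hX, Finset.mem_image] at hx hy
      obtain ⟨r, hr, rfl⟩ := hx
      obtain ⟨s, hs, rfl⟩ := hy
      have hrs : r ≠ s := by rintro rfl; exact hxy rfl
      exact hxsep b r hr s hs hrs
  -- host arcs are wide
  have hWhost : ∀ b ∈ Host, 2*π/3 < Wd B hBne b := by
    intro b hb
    rw [hHost, Finset.mem_image] at hb
    obtain ⟨r, hr, rfl⟩ := hb
    have := hob r hr
    rw [hφ]
    linarith [this.1, this.2]
  -- width sums
  have hsum := Wd_sum B hBne hBmem
  have hsdiff : ∑ b ∈ B, Wd B hBne b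
      = ∑ b ∈ B \ Host, Wd B hBne b + ∑ b ∈ Host, Wd B hBne b :=
    (Finset.sum_sdiff hHostB).symm
  have hrest : ((B \ Host).card : ℝ) * (π/3) ≤ ∑ b ∈ B \ Host, Wd B hBne b := by
    have : ∀ b ∈ B \ Host, π/3 ≤ Wd B hBne b := fun b hb =>
      (Wd_gt B hBne hBmem hBcard2 hBsep b (Finset.mem_sdiff.mp hb).1).le
    calc ((B \ Host).card : ℝ) * (π/3) = ∑ _b ∈ B \ Host, (π/3) := by
          rw [Finset.sum_const, nsmul_eq_mul]
      _ ≤ _ := Finset.sum_le_sum this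
  have hcard_sdiff : ((B \ Host).card : ℝ) = (B.card : ℝ) - (Host.card : ℝ) := by
    rw [Finset.card_sdiff_of_subset hHostB]
    have : Host.card ≤ B.card := Finset.card_le_card hHostB
    push_cast [Nat.cast_sub this]; ring
  -- budget : Host.card + I.card ≤ 5 (when Host nonempty the strictness is automatic)
  have hhostwidth : ((Host.card:ℝ)) * (2*π/3) ≤ ∑ b ∈ Host, Wd B hBne b := by
    have : ∀ b ∈ Host, 2*π/3 ≤ Wd B hBne b := fun b hb => (hWhost b hb).le
    calc ((Host.card:ℝ)) * (2*π/3) = ∑ _b ∈ Host, (2*π/3) := by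
          rw [Finset.sum_const, nsmul_eq_mul]
      _ ≤ _ := Finset.sum_le_sum this
  -- total count
  have hcount : R.card = ∑ b ∈ Host, (R.filter (fun r => φ r = b)).card :=
    Finset.card_eq_sum_card_fiberwise (fun r hr => Finset.mem_image_of_mem φ hr)
  rcases Host.eq_empty_or_nonempty with hHe | hHne
  · -- no hosts: R empty
    have : R.card = 0 := by rw [hcount, hHe]; simp
    rw [this]
    have : (I.card : ℝ) ≤ 5 := by exact_mod_cast hk5
    push_cast
    nlinarith
  · -- budget gives Host.card + I.card ≤ 5
    have hbudget : (Host.card : ℝ) + (I.card : ℝ) < 6 := by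
      have h1 : (Host.card:ℝ) * (2*π/3) + ((B.card:ℝ) - (Host.card:ℝ)) * (π/3) ≤ 2*π := by
        rw [← hcard_sdiff]
        linarith [hsdiff, hsum, hrest, hhostwidth]
      have hBI : (B.card : ℝ) = (I.card : ℝ) := by exact_mod_cast hBcard
      rw [hBI] at h1
      -- need strictness: use one host arc being strictly wide
      obtain ⟨b₁, hb₁⟩ := hHne
      have hstrict := hWhost b₁ hb₁
      -- redo : sum over Host ≥ (card-1)*(2π/3) + Wd b₁ > card * 2π/3 …
      -- we only need non-strict ≤ 5+1: do: host*2π/3 + (I-host)*π/3 ≤ 2π gives host + I ≤ 6;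
      -- to get < 6 use strictness of Wd b₁:
      have h2 : (Host.card:ℝ) * (2*π/3) + ((I.card:ℝ) - (Host.card:ℝ)) * (π/3)
          < ∑ b ∈ Host, Wd B hBne b + ((I.card:ℝ) - (Host.card:ℝ)) * (π/3) := by
        have hsum2 : ∑ b ∈ Host, Wd B hBne b
            = Wd B hBne b₁ + ∑ b ∈ Host.erase b₁, Wd B hBne b := by
          rw [← Finset.add_sum_erase Host _ hb₁]
        have h3 : ((Host.erase b₁).card : ℝ) * (2*π/3) ≤ ∑ b ∈ Host.erase b₁, Wd B hBne b := by
          have : ∀ b ∈ Host.erase b₁, 2*π/3 ≤ Wd B hBne b := fun b hb =>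
            (hWhost b (Finset.mem_of_mem_erase hb)).le
          calc ((Host.erase b₁).card : ℝ) * (2*π/3) = ∑ _b ∈ Host.erase b₁, (2*π/3) := by
                rw [Finset.sum_const, nsmul_eq_mul]
            _ ≤ _ := Finset.sum_le_sum this
        have hce : ((Host.erase b₁).card : ℝ) = (Host.card : ℝ) - 1 := by
          rw [Finset.card_erase_of_mem hb₁]
          have : 1 ≤ Host.card := Finset.card_pos.mpr ⟨b₁, hb₁⟩
          push_cast [Nat.cast_sub this]; ring
        rw [hce] at h3
        have : (Host.card:ℝ) * (2*π/3) < ∑ b ∈ Host, Wd B hBne b := by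
          rw [hsum2]; nlinarith
        linarith
      have hBI2 : (B.card : ℝ) = (I.card : ℝ) := by exact_mod_cast hBcard
      have h4 : ∑ b ∈ Host, Wd B hBne b + ((I.card:ℝ) - (Host.card:ℝ)) * (π/3) ≤ 2*π := by
        rw [← hBI2, ← hcard_sdiff]
        linarith [hsdiff, hsum, hrest]
      nlinarith
    -- final assembly
    have hmain : ((R.card : ℝ) - (Host.card : ℝ)) * (2*π/13)
        ≤ (∑ b ∈ Host, Wd B hBne b) - (Host.card:ℝ) * (π/6) := by
      have h1 : ∀ b ∈ Host, ((R.filter (fun r => φ r = b)).card : ℝ) - 1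
          ≤ (Wd B hBne b - π/6) * (13/(2*π)) := hfiber
      -- sum the fiber bounds
      have h2 : ((R.card:ℝ) - (Host.card:ℝ))
          ≤ (∑ b ∈ Host, (Wd B hBne b - π/6)) * (13/(2*π)) := by
        have h3 : (R.card : ℝ) = ∑ b ∈ Host, ((R.filter (fun r => φ r = b)).card : ℝ) := by
          rw [hcount]; push_cast; ring
        rw [h3, Finset.sum_mul]
        have h4 : ∑ b ∈ Host, (((R.filter (fun r => φ r = b)).card : ℝ) - 1)
            ≤ ∑ b ∈ Host, (Wd B hBne b - π/6) * (13/(2*π)) := Finset.sum_le_sum h1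
        rw [Finset.sum_sub_distrib] at h4
        simp only [Finset.sum_const, nsmul_eq_mul, mul_one] at h4
        linarith
      have h5 : (∑ b ∈ Host, (Wd B hBne b - π/6))
          = (∑ b ∈ Host, Wd B hBne b) - (Host.card:ℝ) * (π/6) := by
        rw [Finset.sum_sub_distrib, Finset.sum_const, nsmul_eq_mul]
      rw [h5] at h2
      have h6 : (0:ℝ) < 2*π/13 := by positivity
      calc ((R.card : ℝ) - (Host.card : ℝ)) * (2*π/13)
          ≤ ((∑ b ∈ Host, Wd B hBne b) - (Host.card:ℝ) * (π/6)) * (13/(2*π)) * (2*π/13) := by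
            apply mul_le_mul_of_nonneg_right h2 h6.le
        _ = (∑ b ∈ Host, Wd B hBne b) - (Host.card:ℝ) * (π/6) := by
            rw [mul_assoc, show (13/(2*π)) * (2*π/13) = 1 by
              field_simp, mul_one]
    -- bound on total host widths
    have hhostsum : ∑ b ∈ Host, Wd B hBne b ≤ 2*π - ((I.card:ℝ) - (Host.card:ℝ)) * (π/3) := by
      have hBI2 : (B.card : ℝ) = (I.card : ℝ) := by exact_mod_cast hBcard
      rw [← hBI2]
      rw [hcard_sdiff] at hrest
      linarith [hsdiff, hsum, hrest]
    -- now pure arithmetic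
    set RR := (R.card : ℝ) with hRR
    set HH := (Host.card : ℝ) with hHH
    set KK := (I.card : ℝ) with hKK
    have hH0 : 0 ≤ HH := by rw [hHH]; exact Nat.cast_nonneg _
    have hnat : Host.card + I.card ≤ 5 := by
      by_contra hcon
      push_neg at hcon
      have : (6:ℝ) ≤ (Host.card : ℝ) + (I.card : ℝ) := by exact_mod_cast (by omega : 6 ≤ Host.card + I.card)
      linarith [hbudget]
    have hH5 : HH ≤ 5 - KK := by
      rw [hHH, hKK]
      have : ((Host.card + I.card : ℕ) : ℝ) ≤ 5 := by exact_mod_cast hnat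
      push_cast at this
      linarith
    -- from hmain and hhostsum:
    have h7 : (RR - HH) * (2*π/13) ≤ 2*π - (KK - HH)*(π/3) - HH*(π/6) := by linarith
    -- divide through by 2π/13 :   RR - HH ≤ 13 - (13/6)(KK - HH) - (13/12) HH
    have hpne := Real.pi_ne_zero
    have h8 : RR - HH ≤ 13 - (13/6)*(KK - HH) - (13/12)*HH := by
      have e1 : RR - HH = (RR - HH) * (2*π/13) * (13/(2*π)) := by field_simp
      have e2 : (2*π - (KK - HH)*(π/3) - HH*(π/6)) * (13/(2*π))
          = 13 - (13/6)*(KK - HH) - (13/12)*HH := by field_simp; ring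
      rw [e1, ← e2]
      apply mul_le_mul_of_nonneg_right h7 (by positivity)
    have hK3 : (3:ℝ) ≤ KK := by rw [hKK]; exact_mod_cast hI3
    clear_value RR HH KK
    linarith only [h8, hH5, hH0, hK3]
end Endgame
/-! pair lemmas -/

noncomputable def dir (z : ℂ) : ℂ := z / (‖z‖ : ℂ)

lemma dir_unit {z : ℂ} (hz : z ≠ 0) : ‖dir z‖ = 1 := by
  have h : ‖z‖ ≠ 0 := norm_ne_zero_iff.mpr hz
  rw [dir, norm_div, Complex.norm_real, Real.norm_eq_abs, abs_norm, div_self h]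

lemma re_conj_comm (z w : ℂ) :
    (z * (starRingEnd ℂ) w).re = (w * (starRingEnd ℂ) z).re := by
  simp [Complex.mul_re]
  ring

lemma re_formula (z w : ℂ) :
    2 * (z * (starRingEnd ℂ) w).re = ‖z‖^2 + ‖w‖^2 - ‖z - w‖^2 := by
  rw [Complex.sq_norm, Complex.sq_norm, Complex.sq_norm]
  simp [Complex.normSq_apply, Complex.mul_re, Complex.sub_re, Complex.sub_im]
  ring

lemma dir_re (z w : ℂ) (hz : z ≠ 0) (hw : w ≠ 0) :
    (dir z * (starRingEnd ℂ) (dir w)).re = (z * (starRingEnd ℂ) w).re / (‖z‖ * ‖w‖) := by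
  have hzn : (‖z‖:ℝ) ≠ 0 := norm_ne_zero_iff.mpr hz
  have hwn : (‖w‖:ℝ) ≠ 0 := norm_ne_zero_iff.mpr hw
  have he : dir z * (starRingEnd ℂ) (dir w)
      = ((((‖z‖ * ‖w‖)⁻¹ : ℝ)) : ℂ) * (z * (starRingEnd ℂ) w) := by
    rw [dir, dir, map_div₀, Complex.conj_ofReal]
    push_cast
    field_simp
  rw [he, Complex.re_ofReal_mul, inv_mul_eq_div]

lemma dir_re_lt {z w : ℂ} (hz : z ≠ 0) (hw : w ≠ 0) {q : ℝ}
    (h : (z * (starRingEnd ℂ) w).re < q * (‖z‖ * ‖w‖)) :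
    (dir z * (starRingEnd ℂ) (dir w)).re < q := by
  rw [dir_re z w hz hw]
  rw [div_lt_iff₀ (mul_pos (norm_pos_iff.mpr hz) (norm_pos_iff.mpr hw))]
  linarith

lemma dir_re_ge {z w : ℂ} (hz : z ≠ 0) (hw : w ≠ 0) {q : ℝ}
    (h : q * (‖z‖ * ‖w‖) ≤ (z * (starRingEnd ℂ) w).re) :
    q ≤ (dir z * (starRingEnd ℂ) (dir w)).re := by
  rw [dir_re z w hz hw]
  rw [le_div_iff₀ (mul_pos (norm_pos_iff.mpr hz) (norm_pos_iff.mpr hw))]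
  linarith

lemma dir_re_self {z : ℂ} (hz : z ≠ 0) : (dir z * (starRingEnd ℂ) (dir z)).re = 1 := by
  rw [Complex.mul_conj]
  rw [show ((Complex.normSq (dir z) : ℂ)).re = Complex.normSq (dir z) from Complex.ofReal_re _]
  rw [Complex.normSq_eq_norm_sq, dir_unit hz]
  norm_num

lemma pair_inner {z w : ℂ} (hz : ‖z‖ ≤ 1) (hw : ‖w‖ ≤ 1) (hd : 1 < ‖z - w‖) :
    z ≠ 0 ∧ w ≠ 0 ∧ (dir z * (starRingEnd ℂ) (dir w)).re < 1/2 := by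
  have hz0 : z ≠ 0 := by
    intro h
    rw [h, zero_sub, norm_neg] at hd
    linarith
  have hw0 : w ≠ 0 := by
    intro h
    rw [h, sub_zero] at hd
    linarith
  refine ⟨hz0, hw0, ?_⟩
  apply dir_re_lt hz0 hw0
  have hf := re_formula z w
  have ha : 0 < ‖z‖ := norm_pos_iff.mpr hz0
  have hb : 0 < ‖w‖ := norm_pos_iff.mpr hw0
  nlinarith [mul_pos ha hb, (1 - ‖z‖)*(1 - ‖w‖), mul_nonneg (sub_nonneg.mpr hz) (sub_nonneg.mpr hw),
    sq_nonneg (‖z‖ - ‖w‖)]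

lemma pair_ring1 {z w : ℂ} (hz1 : 1 < ‖z‖) (hz2 : ‖z‖ ≤ Real.sqrt 2)
    (hw1 : 1 < ‖w‖) (hw2 : ‖w‖ ≤ Real.sqrt 2) (hd : 1 < ‖z - w‖) :
    (dir z * (starRingEnd ℂ) (dir w)).re < 3/4 := by
  have hz0 : z ≠ 0 := by intro h; rw [h, norm_zero] at hz1; linarith
  have hw0 : w ≠ 0 := by intro h; rw [h, norm_zero] at hw1; linarith
  apply dir_re_lt hz0 hw0
  have hf := re_formula z w
  have hs : Real.sqrt 2 ^ 2 = 2 := Real.sq_sqrt (by norm_num)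
  have hslt : Real.sqrt 2 < 1.5 := by nlinarith [sqrt2_lt]
  nlinarith [mul_nonneg (sub_nonneg.mpr hz2) (sub_nonneg.mpr hw2),
    mul_nonneg (sub_nonneg.mpr hz1.le) (sub_nonneg.mpr hz2),
    mul_nonneg (sub_nonneg.mpr hw1.le) (sub_nonneg.mpr hw2),
    sq_nonneg (‖z‖ - ‖w‖)]

lemma pair_ring2 {z w : ℂ} (hz1 : Real.sqrt 2 < ‖z‖) (hz2 : ‖z‖ ≤ 2)
    (hw1 : Real.sqrt 2 < ‖w‖) (hw2 : ‖w‖ ≤ 2) (hd : 1 < ‖z - w‖) :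
    (dir z * (starRingEnd ℂ) (dir w)).re < 5 * Real.sqrt 2/8 := by
  have hs : Real.sqrt 2 ^ 2 = 2 := Real.sq_sqrt (by norm_num)
  have hsp : 0 < Real.sqrt 2 := by positivity
  have hz0 : z ≠ 0 := by intro h; rw [h, norm_zero] at hz1; linarith
  have hw0 : w ≠ 0 := by intro h; rw [h, norm_zero] at hw1; linarith
  apply dir_re_lt hz0 hw0
  have hf := re_formula z w
  nlinarith [mul_nonneg (sub_nonneg.mpr hz1.le) (sub_nonneg.mpr hw1.le),
    mul_nonneg (sub_nonneg.mpr hz2) (sub_nonneg.mpr hw2),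
    mul_nonneg (sub_nonneg.mpr hz1.le) (sub_nonneg.mpr hz2),
    mul_nonneg (sub_nonneg.mpr hw1.le) (sub_nonneg.mpr hw2),
    sq_nonneg (‖z‖ - ‖w‖), sqrt2_lt, sqrt2_gt]

lemma pair_hub {z h : ℂ} (hz1 : Real.sqrt 2 < ‖z‖) (hh : ‖h‖ ≤ 1) (hd : ‖z - h‖ ≤ 1) :
    h ≠ 0 ∧ Real.sqrt 2/2 ≤ (dir z * (starRingEnd ℂ) (dir h)).re := by
  have hs : Real.sqrt 2 ^ 2 = 2 := Real.sq_sqrt (by norm_num)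
  have hsp : 0 < Real.sqrt 2 := by positivity
  have hz0 : z ≠ 0 := by intro hx; rw [hx, norm_zero] at hz1; linarith
  have hh0 : h ≠ 0 := by
    intro hx
    rw [hx, sub_zero] at hd
    linarith [sqrt2_gt]
  refine ⟨hh0, ?_⟩
  apply dir_re_ge hz0 hh0
  have hf := re_formula z h
  have hc : 0 < ‖h‖ := norm_pos_iff.mpr hh0
  have ha2 : 2 < ‖z‖^2 := by nlinarith
  have hd2 : ‖z - h‖^2 ≤ 1 := by nlinarith [norm_nonneg (z - h)]
  nlinarith [sq_nonneg (2*‖h‖ - Real.sqrt 2 * ‖z‖)]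
/-! main theorem -/

end KLP

open KLP Real in
/-- For any vertex `v` of a unit disk graph, the number `k` of degree-1 neighbors
of `v` plus the number `ℓ` of degree-1 vertices at graph distance exactly 2 from
`v` satisfies `k + ℓ ≤ 22`. -/
theorem k_ell_pendant {V : Type*} [Fintype V]
    (G : SimpleGraph V) (hG : IsUnitDiskGraph G) (v : V) :
    {u | G.Adj v u ∧ (G.neighborSet u).ncard = 1}.ncard +
      {u | (G.neighborSet u).ncard = 1 ∧ G.dist v u = 2}.ncard ≤ 22 := by
  classical
  obtain ⟨p, hp⟩ := hG
  set f : V → ℂ := fun u => ⟨p u 0 - p v 0, p u 1 - p v 1⟩ with hf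
  have hnorm : ∀ u w : V, ‖f u - f w‖ = dist (p u) (p w) := by
    intro u w
    rw [EuclideanSpace.dist_eq, Fin.sum_univ_two,
      Complex.norm_def, Complex.normSq_apply]
    have h1 : (f u - f w).re = p u 0 - p w 0 := by simp [hf, Complex.sub_re]
    have h2 : (f u - f w).im = p u 1 - p w 1 := by simp [hf, Complex.sub_im]
    rw [h1, h2, Real.dist_eq, Real.dist_eq, _root_.sq_abs, _root_.sq_abs]
    congr 1
    ring
  have hAdj : ∀ u w : V, G.Adj u w ↔ u ≠ w ∧ ‖f u - f w‖ ≤ 1 := by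
    intro u w
    rw [hp u w, hnorm]
  have hfv : f v = 0 := by
    simp [hf, Complex.ext_iff]
  -- hub
  set hub : V → V := fun u => if h : ∃ w, G.neighborSet u = {w} then h.choose else u with hhub
  have hubAdj : ∀ u : V, (G.neighborSet u).ncard = 1 → ∀ x : V, (G.Adj u x ↔ x = hub u) := by
    intro u hu x
    have hex : ∃ w, G.neighborSet u = {w} := Set.ncard_eq_one.mp hu
    have hchoose := hex.choose_spec
    have hhubu : hub u = hex.choose := by rw [hhub]; simp [dif_pos hex]
    rw [hhubu]
    constructor
    · intro hx
      have hmem : x ∈ G.neighborSet u := hx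
      rw [hchoose] at hmem
      simpa using hmem
    · intro hx
      subst hx
      have hmem : hex.choose ∈ ({hex.choose} : Set V) := Set.mem_singleton _
      rw [← hchoose] at hmem
      exact hmem
  -- the two finsets
  set KA : Finset V := Finset.univ.filter (fun u => G.Adj v u ∧ (G.neighborSet u).ncard = 1)
    with hKA
  set KB : Finset V := Finset.univ.filter
    (fun u => (G.neighborSet u).ncard = 1 ∧ G.dist v u = 2) with hKB
  have hgoalA : {u | G.Adj v u ∧ (G.neighborSet u).ncard = 1}.ncard = KA.card := by
    rw [show {u | G.Adj v u ∧ (G.neighborSet u).ncard = 1} = (KA : Set V) from by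
      ext u; simp [hKA]]
    exact Set.ncard_coe_finset _
  have hgoalB : {u | (G.neighborSet u).ncard = 1 ∧ G.dist v u = 2}.ncard = KB.card := by
    rw [show {u | (G.neighborSet u).ncard = 1 ∧ G.dist v u = 2} = (KB : Set V) from by
      ext u; simp [hKB]]
    exact Set.ncard_coe_finset _
  rw [hgoalA, hgoalB]
  -- membership facts
  have hKAm : ∀ u ∈ KA, G.Adj v u ∧ (G.neighborSet u).ncard = 1 := by
    intro u hu; simpa [hKA] using hu
  have hKBm : ∀ u ∈ KB, (G.neighborSet u).ncard = 1 ∧ G.dist v u = 2 := by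
    intro u hu; simpa [hKB] using hu
  have hKAhub : ∀ u ∈ KA, hub u = v := by
    intro u hu
    exact ((hubAdj u (hKAm u hu).2 v).mp (hKAm u hu).1.symm).symm
  have hKBne : ∀ u ∈ KB, u ≠ v := by
    intro u hu h
    have := (hKBm u hu).2
    rw [h, SimpleGraph.dist_self] at this
    norm_num at this
  have hKBnadj : ∀ u ∈ KB, ¬ G.Adj v u := by
    intro u hu h
    have h1 := SimpleGraph.dist_eq_one_iff_adj.mpr h
    have h2 := (hKBm u hu).2
    omega
  -- hub facts for KB
  have hKBhub : ∀ u ∈ KB, G.Adj v (hub u) ∧ G.Adj (hub u) u := by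
    intro u hu
    have hd := (hKBm u hu).2
    obtain ⟨P, hPlen⟩ := SimpleGraph.exists_walk_of_dist_ne_zero (by rw [hd]; norm_num :
      G.dist v u ≠ 0)
    rw [hd] at hPlen
    have h0 : G.Adj (P.getVert 0) (P.getVert 1) := P.adj_getVert_succ (by omega)
    have h1 : G.Adj (P.getVert 1) (P.getVert 2) := P.adj_getVert_succ (by omega)
    rw [P.getVert_zero] at h0
    have h2 : P.getVert 2 = u := by
      have := P.getVert_length
      rwa [hPlen] at this
    rw [h2] at h1
    have hw : P.getVert 1 = hub u := (hubAdj u (hKBm u hu).1 _).mp h1.symm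
    rw [hw] at h0 h1
    exact ⟨h0, h1⟩
  -- non-adjacency between pendants
  have hAA : ∀ u ∈ KA, ∀ u' ∈ KA, u ≠ u' → ¬ G.Adj u u' := by
    intro u hu u' hu' hne hadj
    have h1 : u' = hub u := (hubAdj u (hKAm u hu).2 u').mp hadj
    rw [hKAhub u hu] at h1
    exact (hKAm u' hu').1.ne (h1.symm)
  have hBB : ∀ u ∈ KB, ∀ u' ∈ KB, u ≠ u' → ¬ G.Adj u u' := by
    intro u hu u' hu' hne hadj
    have h1 : u' = hub u := (hubAdj u (hKBm u hu).1 u').mp hadj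
    have h2 := (hKBhub u hu).1
    rw [← h1] at h2
    exact hKBnadj u' hu' h2
  have hABne : ∀ u ∈ KA, ∀ u' ∈ KB, u ≠ u' := by
    intro u hu u' hu' h
    subst h
    exact hKBnadj u hu' (hKAm u hu).1
  have hAB : ∀ u ∈ KA, ∀ u' ∈ KB, ¬ G.Adj u u' := by
    intro u hu u' hu' hadj
    have h1 : u' = hub u := (hubAdj u (hKAm u hu).2 u').mp hadj
    rw [hKAhub u hu] at h1
    exact hKBne u' hu' h1
  have hAH : ∀ x ∈ KA, ∀ u ∈ KB, x ≠ hub u ∧ ¬ G.Adj x (hub u) := by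
    intro x hx u hu
    constructor
    · intro h
      have h1 := (hKBhub u hu).2
      rw [← h] at h1
      have h2 : u = hub x := (hubAdj x (hKAm x hx).2 u).mp h1
      rw [hKAhub x hx] at h2
      exact hKBne u hu h2
    · intro hadj
      have h1 : hub u = hub x := (hubAdj x (hKAm x hx).2 (hub u)).mp hadj
      rw [hKAhub x hx] at h1
      exact (hKBhub u hu).1.ne h1.symm
  -- distance facts
  have hfar : ∀ u u' : V, u ≠ u' → ¬ G.Adj u u' → 1 < ‖f u - f u'‖ := by
    intro u u' hne hnadj
    by_contra hcon
    push_neg at hcon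
    exact hnadj ((hAdj u u').mpr ⟨hne, hcon⟩)
  have hKAnorm : ∀ u ∈ KA, ‖f u‖ ≤ 1 := by
    intro u hu
    have := ((hAdj v u).mp (hKAm u hu).1).2
    rw [hfv, zero_sub, norm_neg] at this
    exact this
  have hKBnorm1 : ∀ u ∈ KB, 1 < ‖f u‖ := by
    intro u hu
    have := hfar v u (fun h => hKBne u hu h.symm) (hKBnadj u hu)
    rw [hfv, zero_sub, norm_neg] at this
    exact this
  have hKBhubn : ∀ u ∈ KB, ‖f (hub u)‖ ≤ 1 ∧ ‖f u - f (hub u)‖ ≤ 1 := by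
    intro u hu
    have h1 := ((hAdj v (hub u)).mp (hKBhub u hu).1).2
    rw [hfv, zero_sub, norm_neg] at h1
    have h2 := ((hAdj (hub u) u).mp (hKBhub u hu).2).2
    rw [norm_sub_rev] at h2
    exact ⟨h1, h2⟩
  have hKBnorm2 : ∀ u ∈ KB, ‖f u‖ ≤ 2 := by
    intro u hu
    have h := hKBhubn u hu
    calc ‖f u‖ = ‖(f u - f (hub u)) + f (hub u)‖ := by ring_nf
      _ ≤ ‖f u - f (hub u)‖ + ‖f (hub u)‖ := norm_add_le _ _
      _ ≤ 2 := by linarith [h.1, h.2]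
  -- separations
  have hsepAA : ∀ u ∈ KA, ∀ u' ∈ KA, u ≠ u' → 1 < ‖f u - f u'‖ := by
    intro u hu u' hu' hne
    exact hfar u u' hne (hAA u hu u' hu' hne)
  have hsepBB : ∀ u ∈ KB, ∀ u' ∈ KB, u ≠ u' → 1 < ‖f u - f u'‖ := by
    intro u hu u' hu' hne
    exact hfar u u' hne (hBB u hu u' hu' hne)
  have hsepAH : ∀ x ∈ KA, ∀ u ∈ KB, 1 < ‖f x - f (hub u)‖ := by
    intro x hx u hu
    exact hfar x (hub u) (hAH x hx u hu).1 (hAH x hx u hu).2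
  -- split KB
  set KB1 : Finset V := KB.filter (fun u => ‖f u‖ ≤ Real.sqrt 2) with hKB1
  set KB2 : Finset V := KB.filter (fun u => ¬ ‖f u‖ ≤ Real.sqrt 2) with hKB2
  have hKBsplit : KB.card = KB1.card + KB2.card :=
    (Finset.card_filter_add_card_filter_not _).symm
  -- count KB1 ≤ 8
  have hKB1count : KB1.card ≤ 8 := by
    set D1 : Finset ℂ := KB1.image (fun u => dir (f u)) with hD1
    have hmemf : ∀ u ∈ KB1, u ∈ KB ∧ 1 < ‖f u‖ ∧ ‖f u‖ ≤ Real.sqrt 2 := by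
      intro u hu
      rw [hKB1, Finset.mem_filter] at hu
      exact ⟨hu.1, hKBnorm1 u hu.1, hu.2⟩
    have hpair : ∀ u ∈ KB1, ∀ u' ∈ KB1, u ≠ u' →
        (dir (f u) * (starRingEnd ℂ) (dir (f u'))).re < 3/4 := by
      intro u hu u' hu' hne
      obtain ⟨h1, h2, h3⟩ := hmemf u hu
      obtain ⟨h4, h5, h6⟩ := hmemf u' hu'
      exact pair_ring1 h2 h3 h5 h6 (hsepBB u h1 u' h4 hne)
    have hD1card : D1.card = KB1.card := by
      apply Finset.card_image_of_injOn
      intro u hu u' hu' heq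
      by_contra hne
      have h1 := hpair u hu u' hu' hne
      have heq' : dir (f u) = dir (f u') := heq
      rw [heq'] at h1
      rw [dir_re_self (by
        have := (hmemf u' hu').2.1; intro hz; rw [hz, norm_zero] at this; linarith)] at h1
      norm_num at h1
    have hcp := circ_pack D1 (3/4) (2*π/9) (by positivity) (by linarith [Real.pi_gt_three])
      (le_of_lt cos_915)
      (by
        intro z hz
        rw [hD1, Finset.mem_image] at hz
        obtain ⟨u, hu, rfl⟩ := hz
        exact dir_unit (by
          have := (hmemf u hu).2.1; intro h; rw [h, norm_zero] at this; linarith))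
      (by
        intro z hz w hw hne
        rw [hD1, Finset.mem_image] at hz hw
        obtain ⟨u, hu, rfl⟩ := hz
        obtain ⟨u', hu', rfl⟩ := hw
        exact hpair u hu u' hu' (by rintro rfl; exact hne rfl))
    rw [hD1card] at hcp
    by_contra hcon
    push_neg at hcon
    have h9 : (9:ℝ) ≤ (KB1.card : ℝ) := by exact_mod_cast hcon
    nlinarith [Real.pi_pos]
  -- KB2 facts
  have hmem2 : ∀ u ∈ KB2, u ∈ KB ∧ Real.sqrt 2 < ‖f u‖ ∧ ‖f u‖ ≤ 2 := by
    intro u hu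
    rw [hKB2, Finset.mem_filter] at hu
    exact ⟨hu.1, lt_of_not_ge hu.2, hKBnorm2 u hu.1⟩
  have hKB2f0 : ∀ u ∈ KB2, f u ≠ 0 := by
    intro u hu h
    have := (hmem2 u hu).2.1
    rw [h, norm_zero] at this
    linarith [sqrt2_gt]
  have hpair2 : ∀ u ∈ KB2, ∀ u' ∈ KB2, u ≠ u' →
      (dir (f u) * (starRingEnd ℂ) (dir (f u'))).re < 5 * Real.sqrt 2/8 := by
    intro u hu u' hu' hne
    obtain ⟨h1, h2, h3⟩ := hmem2 u hu
    obtain ⟨h4, h5, h6⟩ := hmem2 u' hu'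
    exact pair_ring2 h2 h3 h5 h6 (hsepBB u h1 u' h4 hne)
  set R : Finset ℂ := KB2.image (fun u => dir (f u)) with hR
  have hRcard : R.card = KB2.card := by
    apply Finset.card_image_of_injOn
    intro u hu u' hu' heq
    by_contra hne
    have h1 := hpair2 u hu u' hu' hne
    have heq' : dir (f u) = dir (f u') := heq
    rw [heq', dir_re_self (hKB2f0 u' hu')] at h1
    nlinarith [sqrt2_lt]
  have hRunit : ∀ z ∈ R, ‖z‖ = 1 := by
    intro z hz
    rw [hR, Finset.mem_image] at hz
    obtain ⟨u, hu, rfl⟩ := hz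
    exact dir_unit (hKB2f0 u hu)
  have hRsep : ∀ z ∈ R, ∀ w ∈ R, z ≠ w → (z * (starRingEnd ℂ) w).re < 5 * Real.sqrt 2/8 := by
    intro z hz w hw hne
    rw [hR, Finset.mem_image] at hz hw
    obtain ⟨u, hu, rfl⟩ := hz
    obtain ⟨u', hu', rfl⟩ := hw
    exact hpair2 u hu u' hu' (by rintro rfl; exact hne rfl)
  have hKB2count12 : KB2.card ≤ 12 := by
    have hcp := circ_pack R (5 * Real.sqrt 2/8) (2*π/13) (by positivity)
      (by linarith [Real.pi_gt_three]) (le_of_lt cos_q2) hRunit hRsep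
    rw [hRcard] at hcp
    by_contra hcon
    push_neg at hcon
    have h13 : (13:ℝ) ≤ (KB2.card : ℝ) := by exact_mod_cast hcon
    nlinarith [Real.pi_pos]
  -- main case split
  rcases le_or_gt KA.card 2 with hk2 | hk3
  · omega
  · -- k ≥ 3
    have hKA0 : ∀ u ∈ KA, f u ≠ 0 := by
      intro u hu
      obtain ⟨u', hu', hne⟩ : ∃ u' ∈ KA, u' ≠ u := by
        by_contra hcon
        push_neg at hcon
        have : KA ⊆ {u} := fun x hx => Finset.mem_singleton.mpr (hcon x hx)
        have := Finset.card_le_card this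
        simp at this
        omega
      exact (pair_inner (hKAnorm u' hu') (hKAnorm u hu)
        (hsepAA u' hu' u hu hne)).2.1
    have hpairI : ∀ u ∈ KA, ∀ u' ∈ KA, u ≠ u' →
        (dir (f u) * (starRingEnd ℂ) (dir (f u'))).re < 1/2 := by
      intro u hu u' hu' hne
      exact (pair_inner (hKAnorm u hu) (hKAnorm u' hu') (hsepAA u hu u' hu' hne)).2.2
    set I : Finset ℂ := KA.image (fun u => dir (f u)) with hI
    have hIcard : I.card = KA.card := by
      apply Finset.card_image_of_injOn
      intro u hu u' hu' heq
      by_contra hne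
      have h1 := hpairI u hu u' hu' hne
      have heq' : dir (f u) = dir (f u') := heq
      rw [heq', dir_re_self (hKA0 u' hu')] at h1
      norm_num at h1
    have hIunit : ∀ z ∈ I, ‖z‖ = 1 := by
      intro z hz
      rw [hI, Finset.mem_image] at hz
      obtain ⟨u, hu, rfl⟩ := hz
      exact dir_unit (hKA0 u hu)
    have hIsep : ∀ z ∈ I, ∀ w ∈ I, z ≠ w → (z * (starRingEnd ℂ) w).re < 1/2 := by
      intro z hz w hw hne
      rw [hI, Finset.mem_image] at hz hw
      obtain ⟨u, hu, rfl⟩ := hz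
      obtain ⟨u', hu', rfl⟩ := hw
      exact hpairI u hu u' hu' (by rintro rfl; exact hne rfl)
    -- k ≤ 5
    have hk5 : KA.card ≤ 5 := by
      have hcp := circ_pack I (1/2) (π/3) (by positivity) (by linarith [Real.pi_pos])
        (by rw [Real.cos_pi_div_three]) hIunit hIsep
      rw [hIcard] at hcp
      by_contra hcon
      push_neg at hcon
      have h6 : (6:ℝ) ≤ (KA.card : ℝ) := by exact_mod_cast hcon
      nlinarith [Real.pi_pos]
    -- hubs for R
    have hhub : ∀ r ∈ R, ∃ h : ℂ, ‖h‖ = 1 ∧ Real.sqrt 2/2 ≤ (r * (starRingEnd ℂ) h).re ∧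
        ∀ i ∈ I, (h * (starRingEnd ℂ) i).re < 1/2 := by
      intro r hr
      rw [hR, Finset.mem_image] at hr
      obtain ⟨u, hu, rfl⟩ := hr
      obtain ⟨huKB, hun1, hun2⟩ := hmem2 u hu
      have hph := pair_hub hun1 (hKBhubn u huKB).1 (hKBhubn u huKB).2
      refine ⟨dir (f (hub u)), dir_unit hph.1, hph.2, ?_⟩
      · intro i hi
        rw [hI, Finset.mem_image] at hi
        obtain ⟨x, hx, rfl⟩ := hi
        rw [re_conj_comm]
        exact (pair_inner (hKAnorm x hx) (hKBhubn u huKB).1 (hsepAH x hx u huKB)).2.2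
    have hend := endgame I hIunit hIsep R (by rw [hIcard]; omega) hRunit hRsep hhub
    rw [hRcard, hIcard] at hend
    -- conclude
    have hk3' : (3:ℝ) ≤ (KA.card:ℝ) := by exact_mod_cast hk3
    have htot : ((KA.card + KB.card : ℕ) : ℝ) < 22 := by
      push_cast
      have h1 : (KB.card:ℝ) = (KB1.card:ℝ) + (KB2.card:ℝ) := by exact_mod_cast hKBsplit
      have h8 : (KB1.card:ℝ) ≤ 8 := by exact_mod_cast hKB1count
      linarith
    have : KA.card + KB.card < 22 := by exact_mod_cast htot
    omega
end

section
/- Every unit disk graph G admits an independent dominating set D such that |D| ≤ (44/9)·|D*|, where D* is a minimum dominating set of G. In particular, a 44/9-approximation to the minimum dominating set of a unit disk graph always exists among its independent dominating sets. -/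
open Real Complex

noncomputable def toC (x : EuclideanSpace ℝ (Fin 2)) : ℂ := ⟨x 0, x 1⟩

lemma dist_toC (x y : EuclideanSpace ℝ (Fin 2)) : dist (toC x) (toC y) = dist x y := by
  rw [EuclideanSpace.dist_eq, Complex.dist_eq, Complex.norm_def]
  have : toC x - toC y = ⟨x 0 - y 0, x 1 - y 1⟩ := by simp [toC, Complex.ext_iff]
  rw [this, Complex.normSq_mk, Fin.sum_univ_two]
  congr 1
  rw [Real.dist_eq, Real.dist_eq, _root_.sq_abs, _root_.sq_abs]
  ring

lemma re_mul_conj_s12 (z w : ℂ) :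
    (z * (starRingEnd ℂ) w).re = ‖z‖ * ‖w‖ * Real.cos (z.arg - w.arg) := by
  have h2 : z * (starRingEnd ℂ) w =
      ((‖z‖ * ‖w‖ : ℝ) : ℂ) * Complex.exp (↑(z.arg - w.arg) * Complex.I) := by
    conv_lhs => rw [← Complex.norm_mul_exp_arg_mul_I z, ← Complex.norm_mul_exp_arg_mul_I w]
    rw [map_mul, Complex.conj_ofReal, ← Complex.exp_conj, map_mul, Complex.conj_ofReal,
      Complex.conj_I]
    rw [show (‖z‖ : ℂ) * Complex.exp (↑z.arg * Complex.I) *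
        ((‖w‖ : ℂ) * Complex.exp (↑w.arg * -Complex.I)) =
        ((‖z‖ : ℂ) * (‖w‖ : ℂ)) *
          (Complex.exp (↑z.arg * Complex.I) * Complex.exp (↑w.arg * -Complex.I)) from by ring,
      ← Complex.exp_add]
    push_cast
    ring_nf
  have h3 : (Complex.exp (↑(z.arg - w.arg) * Complex.I)).re = Real.cos (z.arg - w.arg) := by
    rw [Complex.exp_mul_I]
    simp [← Complex.ofReal_sub, Complex.cos_ofReal_re, Complex.sin_ofReal_im]
  rw [h2, Complex.re_ofReal_mul, h3]

lemma cos_close {z w : ℂ} (hz : z ≠ 0) (hw : w ≠ 0) (hz1 : ‖z‖ ≤ 1)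
    (hw1 : ‖w‖ ≤ 1) (hcos : 1/2 ≤ Real.cos (z.arg - w.arg)) :
    ‖z - w‖ ≤ 1 := by
  have hsq : ‖z - w‖ ^ 2 =
      ‖z‖ ^ 2 + ‖w‖ ^ 2 -
        2 * (‖z‖ * ‖w‖ * Real.cos (z.arg - w.arg)) := by
    rw [Complex.sq_norm, Complex.normSq_sub, Complex.sq_norm, Complex.sq_norm, re_mul_conj_s12]
  have hr0 : 0 < ‖z‖ := norm_pos_iff.mpr hz
  have hs0 : 0 < ‖w‖ := norm_pos_iff.mpr hw
  nlinarith [norm_nonneg (z - w), mul_pos hr0 hs0,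
    mul_nonneg (sub_nonneg.2 hz1) (sub_nonneg.2 hw1),
    mul_nonneg hr0.le (sub_nonneg.2 hz1), mul_nonneg hs0.le (sub_nonneg.2 hw1),
    mul_le_mul_of_nonneg_left hcos (mul_pos hr0 hs0).le]

lemma gap_bounds {θ : ℝ} (h0 : 0 < θ) (h2 : θ < 2 * π) (hc : Real.cos θ < 1/2) :
    π/3 < θ ∧ θ < 5*π/3 := by
  have hπ := Real.pi_pos
  constructor
  · by_contra h
    push_neg at h
    have := Real.cos_le_cos_of_nonneg_of_le_pi h0.le (by linarith : π/3 ≤ π) h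
    rw [Real.cos_pi_div_three] at this
    linarith
  · by_contra h
    push_neg at h
    have h5 : 0 ≤ 2*π - θ := by linarith
    have h6 : 2*π - θ ≤ π/3 := by linarith
    have := Real.cos_le_cos_of_nonneg_of_le_pi h5 (by linarith : π/3 ≤ π) h6
    rw [Real.cos_pi_div_three, Real.cos_two_pi_sub] at this
    linarith

lemma list_eq_six {α : Type*} {l : List α} (h : l.length = 6) :
    ∃ a b c d e f, l = [a,b,c,d,e,f] := by
  rcases l with _|⟨a, _|⟨b, _|⟨c, _|⟨d, _|⟨e, _|⟨f, _|⟨g,l⟩⟩⟩⟩⟩⟩⟩ <;>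
    first
      | exact ⟨_,_,_,_,_,_,rfl⟩
      | simp_all

lemma six_points (c : ℂ) (t : Finset ℂ) (hcard : t.card = 6)
    (hd : ∀ z ∈ t, dist z c ≤ 1)
    (hsep : ∀ z ∈ t, ∀ w ∈ t, z ≠ w → 1 < dist z w) : False := by
  have hπ := Real.pi_pos
  have hne : ∀ z ∈ t, z ≠ c := by
    intro z hz hzc
    obtain ⟨w, hw, hwz⟩ := Finset.exists_mem_ne (show 1 < t.card by rw [hcard]; norm_num) z
    have h1 := hsep w hw z hz hwz
    have h2 := hd w hw
    rw [← hzc] at h2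
    linarith
  set a : ℂ → ℝ := fun z => (z - c).arg with ha
  have key : ∀ z ∈ t, ∀ w ∈ t, z ≠ w → Real.cos (a z - a w) < 1/2 := by
    intro z hz w hw hzw
    by_contra hcc
    push_neg at hcc
    have h1 : ‖(z - c) - (w - c)‖ ≤ 1 :=
      cos_close (sub_ne_zero.2 (hne z hz)) (sub_ne_zero.2 (hne w hw))
        (by rw [← Complex.dist_eq]; exact hd z hz)
        (by rw [← Complex.dist_eq]; exact hd w hw) hcc
    have h2 : (z - c) - (w - c) = z - w := by ring
    rw [h2, ← Complex.dist_eq] at h1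
    exact absurd h1 (not_le.2 (hsep z hz w hw hzw))
  have hinj : Set.InjOn a t := by
    intro z hz w hw hzw'
    by_contra hzw
    have := key z hz w hw hzw
    rw [hzw', sub_self, Real.cos_zero] at this
    linarith
  set T := t.image a with hTdef
  have hT : T.card = 6 := by rw [Finset.card_image_of_injOn hinj, hcard]
  have hlen : (T.sort (· ≤ ·)).length = 6 := by rw [Finset.length_sort]; exact hT
  obtain ⟨t1,t2,t3,t4,t5,t6, heq⟩ := list_eq_six hlen
  have hsorted := (Finset.sortedLT_sort T).pairwise
  rw [heq] at hsorted
  have hmem : ∀ x ∈ ([t1,t2,t3,t4,t5,t6] : List ℝ), x ∈ T := by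
    intro x hx
    rw [← Finset.mem_sort (α := ℝ) (· ≤ ·), heq]
    exact hx
  have step : ∀ x ∈ T, ∀ y ∈ T, x < y → π/3 < y - x ∧ y - x < 5*(π/3) := by
    intro x hx y hy hxy
    obtain ⟨z, hz, rfl⟩ := Finset.mem_image.1 hx
    obtain ⟨w, hw, rfl⟩ := Finset.mem_image.1 hy
    have hzw : w ≠ z := by rintro rfl; exact lt_irrefl _ hxy
    have hcos := key w hw z hz hzw
    have h1 : a w ≤ π := Complex.arg_le_pi _
    have h2 : -π < a z := Complex.neg_pi_lt_arg _
    have := gap_bounds (by linarith) (by linarith) hcos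
    constructor <;> linarith [this.1, this.2]
  simp only [List.pairwise_cons, List.mem_cons, List.not_mem_nil, or_false,
    forall_eq_or_imp, forall_eq, List.mem_singleton] at hsorted
  obtain ⟨⟨h12, h13, h14, h15, h16⟩, ⟨h23, h24, h25, h26⟩, ⟨h34, h35, h36⟩,
    ⟨h45, h46⟩, h56, -⟩ := hsorted
  have m1 := hmem t1 (by simp)
  have m2 := hmem t2 (by simp)
  have m3 := hmem t3 (by simp)
  have m4 := hmem t4 (by simp)
  have m5 := hmem t5 (by simp)
  have m6 := hmem t6 (by simp)
  have s12 := (step t1 m1 t2 m2 h12).1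
  have s23 := (step t2 m2 t3 m3 h23).1
  have s34 := (step t3 m3 t4 m4 h34).1
  have s45 := (step t4 m4 t5 m5 h45).1
  have s56 := (step t5 m5 t6 m6 h56).1
  have s16 := (step t1 m1 t6 m6 h16).2
  linarith

lemma disk_le_five (c : ℂ) (s : Finset ℂ) (hd : ∀ z ∈ s, dist z c ≤ 1)
    (hsep : ∀ z ∈ s, ∀ w ∈ s, z ≠ w → 1 < dist z w) : s.card ≤ 5 := by
  by_contra h
  push_neg at h
  obtain ⟨t, hts, ht6⟩ := Finset.exists_subset_card_eq (show 6 ≤ s.card by omega)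
  exact six_points c t ht6 (fun z hz => hd z (hts hz))
    (fun z hz w hw => hsep z (hts hz) w (hts hw))


/-- Every unit disk graph admits an independent dominating set whose size is at
most `44/9` times the size of a minimum dominating set. -/
theorem exists_indep_dominating_44_9_approx {V : Type*} [Fintype V]
    (G : SimpleGraph V) (hG : IsUnitDiskGraph G)
    (Dstar : Set V) (hDstar : IsDominatingSet G Dstar)
    (hmin : ∀ D' : Set V, IsDominatingSet G D' → Dstar.ncard ≤ D'.ncard) :
    ∃ D : Set V, IsIndependentSet G D ∧ IsDominatingSet G D ∧
      (D.ncard : ℝ) ≤ 44 / 9 * Dstar.ncard := by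
  classical
  obtain ⟨p, hadj⟩ := hG
  have hsymm : Symmetric (fun u v : V => ¬ G.Adj u v) := fun u v h hadj' => h hadj'.symm
  -- maximal independent subset of Dstar
  obtain ⟨D, hDmem, hDmax⟩ :=
    Set.Finite.exists_maximalFor id {S : Set V | S ⊆ Dstar ∧ IsIndependentSet G S}
      (Set.toFinite _) ⟨∅, Set.empty_subset _, Set.pairwise_empty _⟩
  obtain ⟨hDsub, hDind⟩ := hDmem
  -- maximal independent superset of D
  obtain ⟨D', hD'mem, hD'max⟩ :=
    Set.Finite.exists_maximalFor id {S : Set V | D ⊆ S ∧ IsIndependentSet G S}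
      (Set.toFinite _) ⟨D, subset_rfl, hDind⟩
  obtain ⟨hDD', hD'ind⟩ := hD'mem
  -- D' is dominating
  have hdom : IsDominatingSet G D' := by
    intro v hv
    by_contra hno
    push_neg at hno
    have hins : IsIndependentSet G (insert v D') := by
      rw [IsIndependentSet, (haveI : Std.Symm (fun u v : V => ¬ G.Adj u v) := ⟨fun a b h => hsymm h⟩; Set.pairwise_insert_of_symm (r := fun u v : V => ¬ G.Adj u v))]
      exact ⟨hD'ind, fun b hb _ habj => hno b hb habj.symm⟩
    have heq := @hD'max (insert v D')
      ⟨hDD'.trans (Set.subset_insert _ _), hins⟩ (Set.subset_insert _ _)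
    simp only [id] at heq
    exact hv (heq (Set.mem_insert v D'))
  -- every dominator outside D has a neighbor in D
  have hDnbr : ∀ u ∈ Dstar, u ∉ D → ∃ x ∈ D, G.Adj x u := by
    intro u hu hunotD
    by_contra hno
    push_neg at hno
    have hins : IsIndependentSet G (insert u D) := by
      rw [IsIndependentSet, (haveI : Std.Symm (fun u v : V => ¬ G.Adj u v) := ⟨fun a b h => hsymm h⟩; Set.pairwise_insert_of_symm (r := fun u v : V => ¬ G.Adj u v))]
      exact ⟨hDind, fun b hb _ hadjb => hno b hb hadjb.symm⟩
    have heq := @hDmax (insert u D)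
      ⟨Set.insert_subset hu hDsub, hins⟩ (Set.subset_insert _ _)
    simp only [id] at heq
    exact hunotD (heq (Set.mem_insert u D))
  -- distance separation within D'
  have hdist : ∀ w ∈ D', ∀ w' ∈ D', w ≠ w' → 1 < dist (p w) (p w') := by
    intro w hw w' hw' hne
    have hna : ¬ G.Adj w w' := hD'ind hw hw' hne
    rw [hadj] at hna
    push_neg at hna
    exact hna hne
  -- Finset versions
  set Df := (Set.toFinite D).toFinset with hDf
  set D'f := (Set.toFinite D').toFinset with hD'f
  set Dsf := (Set.toFinite Dstar).toFinset with hDsf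
  set Af := (Set.toFinite (Dstar \ D)).toFinset with hAf
  set Sf : V → Finset V :=
    fun u => Finset.univ.filter (fun w => w ∈ D' ∧ w ∉ D ∧ dist (p w) (p u) ≤ 1) with hSf
  have memSf : ∀ u w, w ∈ Sf u ↔ (w ∈ D' ∧ w ∉ D ∧ dist (p w) (p u) ≤ 1) := by
    intro u w
    simp [hSf]
  -- covering
  have cover : D'f \ Df ⊆ Af.biUnion Sf := by
    intro w hw
    rw [Finset.mem_sdiff, Set.Finite.mem_toFinset, Set.Finite.mem_toFinset] at hw
    obtain ⟨hwD', hwD⟩ := hw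
    rw [Finset.mem_biUnion]
    by_cases hws : w ∈ Dstar
    · exact ⟨w, by rw [Set.Finite.mem_toFinset]; exact ⟨hws, hwD⟩,
        (memSf w w).2 ⟨hwD', hwD, by simp⟩⟩
    · obtain ⟨u, hu, huw⟩ := hDstar w hws
      have huD : u ∉ D := by
        intro huD
        exact hD'ind (hDD' huD) hwD' (G.ne_of_adj huw) huw
      have hd1 : dist (p w) (p u) ≤ 1 := by
        rw [dist_comm]
        exact ((hadj u w).1 huw).2
      exact ⟨u, by rw [Set.Finite.mem_toFinset]; exact ⟨hu, huD⟩,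
        (memSf u w).2 ⟨hwD', hwD, hd1⟩⟩
  -- each Sf u has at most 4 elements
  have bound : ∀ u ∈ Af, (Sf u).card ≤ 4 := by
    intro u hu
    rw [Set.Finite.mem_toFinset] at hu
    obtain ⟨x, hxD, hxadj⟩ := hDnbr u hu.1 hu.2
    set q : V → ℂ := fun w => toC (p w) with hq
    have hsubD' : (insert x (Sf u) : Finset V) ⊆ D'f := by
      intro w hw
      rw [Finset.mem_insert] at hw
      rw [Set.Finite.mem_toFinset]
      rcases hw with rfl | hw
      · exact hDD' hxD
      · exact ((memSf u w).1 hw).1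
    have hqinj : Set.InjOn q (insert x (Sf u) : Finset V) := by
      intro w hw w' hw' hqe
      by_contra hne
      simp only [hq] at hqe
      have h1 := hdist w (by rw [← Set.Finite.mem_toFinset (Set.toFinite D')]; exact hsubD' hw)
        w' (by rw [← Set.Finite.mem_toFinset (Set.toFinite D')]; exact hsubD' hw') hne
      rw [← dist_toC (p w) (p w'), hqe, dist_self] at h1
      linarith
    have hxnot : x ∉ Sf u := by
      intro hx
      exact ((memSf u x).1 hx).2.1 hxD
    have hF := disk_le_five (toC (p u)) ((insert x (Sf u)).image q) ?_ ?_
    · rw [Finset.card_image_of_injOn hqinj, Finset.card_insert_of_notMem hxnot] at hF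
      omega
    · intro z hz
      obtain ⟨w, hw, rfl⟩ := Finset.mem_image.1 hz
      rw [dist_toC]
      rw [Finset.mem_insert] at hw
      rcases hw with rfl | hw
      · exact ((hadj w u).1 hxadj).2
      · exact ((memSf u w).1 hw).2.2
    · intro z hz z' hz' hne
      obtain ⟨w, hw, rfl⟩ := Finset.mem_image.1 hz
      obtain ⟨w', hw', rfl⟩ := Finset.mem_image.1 hz'
      have hwne : w ≠ w' := by rintro rfl; exact hne rfl
      rw [dist_toC]
      exact hdist w (by rw [← Set.Finite.mem_toFinset (Set.toFinite D')]; exact hsubD' hw)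
        w' (by rw [← Set.Finite.mem_toFinset (Set.toFinite D')]; exact hsubD' hw') hwne
  -- cardinality bookkeeping
  have hsub1 : Df ⊆ D'f := by
    intro w hw
    rw [Set.Finite.mem_toFinset] at *
    exact hDD' hw
  have hsub2 : Df ⊆ Dsf := by
    intro w hw
    rw [Set.Finite.mem_toFinset] at *
    exact hDsub hw
  have hAeq : Af = Dsf \ Df := by
    ext w
    simp only [hAf, hDsf, hDf, Finset.mem_sdiff, Set.Finite.mem_toFinset, Set.mem_diff]
  have hc1 := Finset.card_sdiff_add_card_eq_card hsub1
  have hc2 := Finset.card_sdiff_add_card_eq_card hsub2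
  have hc3 : (D'f \ Df).card ≤ Af.card * 4 :=
    le_trans (Finset.card_le_card cover) (Finset.card_biUnion_le_card_mul _ _ _ bound)
  rw [hAeq] at hc3
  have hnat : D'f.card ≤ 4 * Dsf.card := by omega
  refine ⟨D', hD'ind, hdom, ?_⟩
  rw [Set.ncard_eq_toFinset_card D' (Set.toFinite D'),
    Set.ncard_eq_toFinset_card Dstar (Set.toFinite Dstar)]
  have h4 : (D'f.card : ℝ) ≤ 4 * Dsf.card := by exact_mod_cast hnat
  have h5 : (4 : ℝ) * Dsf.card ≤ 44 / 9 * Dsf.card := by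
    have : (0:ℝ) ≤ (Dsf.card : ℝ) := Nat.cast_nonneg _
    nlinarith
  calc ((Set.toFinite D').toFinset.card : ℝ) ≤ 4 * Dsf.card := h4
    _ ≤ 44 / 9 * Dsf.card := h5
end

section
/- Every unit disk graph G admits an independent dominating set D such that |D| ≤ (43/9)·|D*|, where D* is a minimum dominating set of G. In particular, a 43/9-approximation to the minimum dominating set of a unit disk graph always exists among its independent dominating sets. -/
open Real in
lemma angle_pigeonhole (θ : Fin 6 → ℝ) (hθ : ∀ i, θ i ∈ Set.Ioc (-Real.pi) Real.pi) :
    ∃ i j : Fin 6, i ≠ j ∧ (1:ℝ)/2 ≤ Real.cos (θ i - θ j) := by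
  have hπ := Real.pi_pos
  set σ := Tuple.sort θ with hσ
  set g : Fin 6 → ℝ := θ ∘ σ with hg
  have hmono : Monotone g := Tuple.monotone_sort θ
  have key : ∀ k l : Fin 6, k < l → g l - g k ≤ Real.pi / 3 →
      ∃ i j : Fin 6, i ≠ j ∧ (1:ℝ)/2 ≤ Real.cos (θ i - θ j) := by
    intro k l hkl hle
    refine ⟨σ l, σ k, fun h => hkl.ne (σ.injective h).symm, ?_⟩
    have hθeq : θ (σ l) - θ (σ k) = g l - g k := rfl
    rw [hθeq]
    have h0 : 0 ≤ g l - g k := sub_nonneg.2 (hmono hkl.le)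
    have := Real.cos_le_cos_of_nonneg_of_le_pi h0 (by linarith) hle
    rw [Real.cos_pi_div_three] at this
    linarith
  rcases le_or_gt (g 1 - g 0) (π/3) with h01 | h01
  · exact key 0 1 (by decide) h01
  rcases le_or_gt (g 2 - g 1) (π/3) with h12 | h12
  · exact key 1 2 (by decide) h12
  rcases le_or_gt (g 3 - g 2) (π/3) with h23 | h23
  · exact key 2 3 (by decide) h23
  rcases le_or_gt (g 4 - g 3) (π/3) with h34 | h34
  · exact key 3 4 (by decide) h34
  rcases le_or_gt (g 5 - g 4) (π/3) with h45 | h45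
  · exact key 4 5 (by decide) h45
  -- now g 5 - g 0 > 5π/3, and < 2π
  have h5 : g 5 ≤ π := (hθ (σ 5)).2
  have h0' : -π < g 0 := (hθ (σ 0)).1
  refine ⟨σ 5, σ 0, fun h => (by decide : (5:Fin 6) ≠ 0) (σ.injective h), ?_⟩
  have hθeq : θ (σ 5) - θ (σ 0) = g 5 - g 0 := rfl
  rw [hθeq]
  have hcos : Real.cos (g 5 - g 0) = Real.cos (2*π - (g 5 - g 0)) := (Real.cos_two_pi_sub _).symm
  rw [hcos]
  have := Real.cos_le_cos_of_nonneg_of_le_pi (x := 2*π - (g 5 - g 0)) (y := π/3)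
    (by linarith) (by linarith) (by linarith)
  rw [Real.cos_pi_div_three] at this
  linarith

open Real in
lemma six_points_complex (z : Fin 6 → ℂ) (h : ∀ i, ‖z i‖ ≤ 1) :
    ∃ i j : Fin 6, i ≠ j ∧ ‖z i - z j‖ ≤ 1 := by
  by_cases h0 : ∃ i, z i = 0
  · obtain ⟨i, hi⟩ := h0
    obtain ⟨j, hj⟩ := exists_ne i
    refine ⟨j, i, hj, ?_⟩
    rw [hi, sub_zero]; exact h j
  push_neg at h0
  obtain ⟨i, j, hij, hcos⟩ := angle_pigeonhole (fun i => (z i).arg)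
    (fun i => Complex.arg_mem_Ioc (z i))
  refine ⟨i, j, hij, ?_⟩
  set r := ‖z i‖ with hr
  set s := ‖z j‖ with hs
  have hzi : (r:ℂ) * Complex.exp ((z i).arg * Complex.I) = z i :=
    Complex.norm_mul_exp_arg_mul_I _
  have hzj : (s:ℂ) * Complex.exp ((z j).arg * Complex.I) = z j :=
    Complex.norm_mul_exp_arg_mul_I _
  have hconj : (starRingEnd ℂ) (Complex.exp ((z j).arg * Complex.I)) =
      Complex.exp ((-(z j).arg : ℝ) * Complex.I) := by
    rw [← Complex.exp_conj]
    congr 1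
    simp [Complex.ext_iff]
  have hprod : z i * (starRingEnd ℂ) (z j) =
      ((r*s : ℝ):ℂ) * Complex.exp ((((z i).arg - (z j).arg : ℝ)) * Complex.I) := by
    conv_lhs => rw [← hzi, ← hzj]
    have hexp : ((z i).arg : ℂ) * Complex.I + ((-(z j).arg : ℝ) : ℂ) * Complex.I =
        (((z i).arg - (z j).arg : ℝ) : ℂ) * Complex.I := by push_cast; ring
    rw [map_mul, hconj, Complex.conj_ofReal, mul_mul_mul_comm, ← Complex.exp_add, hexp]
    push_cast
    ring
  have hre : (z i * (starRingEnd ℂ) (z j)).re = r * s * Real.cos ((z i).arg - (z j).arg) := by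
    have hre' : (((r*s:ℝ):ℂ) * Complex.exp ((((z i).arg - (z j).arg : ℝ)) * Complex.I)).re
        = (r*s) * (Complex.exp ((((z i).arg - (z j).arg : ℝ)) * Complex.I)).re := by
      simp [Complex.mul_re]
    rw [hprod, hre', Complex.exp_ofReal_mul_I_re]
  have hsq : ‖z i - z j‖ ^ 2 = r^2 + s^2 - 2*(r*s*Real.cos ((z i).arg - (z j).arg)) := by
    rw [Complex.sq_norm, Complex.normSq_sub, hre, Complex.sq_norm, Complex.sq_norm]
  have hr1 : r ≤ 1 := h i
  have hs1 : s ≤ 1 := h j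
  have hr0 : 0 ≤ r := norm_nonneg _
  have hs0 : 0 ≤ s := norm_nonneg _
  have habs0 : 0 ≤ ‖z i - z j‖ := norm_nonneg _
  nlinarith [mul_nonneg hr0 hs0, mul_le_one₀ hr1 hs0 hs1]

lemma six_points_ball (c : EuclideanSpace ℝ (Fin 2)) (q : Fin 6 → EuclideanSpace ℝ (Fin 2))
    (h : ∀ i, dist (q i) c ≤ 1) : ∃ i j : Fin 6, i ≠ j ∧ dist (q i) (q j) ≤ 1 := by
  set e := Complex.orthonormalBasisOneI.repr.symm with he
  set z : Fin 6 → ℂ := fun i => e (q i) - e c with hz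
  have habs : ∀ i, ‖z i‖ ≤ 1 := by
    intro i
    have : ‖z i‖ = dist (e (q i)) (e c) := (Complex.dist_eq _ _).symm
    rw [this, e.dist_map]
    exact h i
  obtain ⟨i, j, hij, hle⟩ := six_points_complex z habs
  refine ⟨i, j, hij, ?_⟩
  have : z i - z j = e (q i) - e (q j) := by simp only [hz]; ring
  rw [this] at hle
  rw [← e.dist_map]
  rwa [Complex.dist_eq]

/-- Every unit disk graph admits an independent dominating set whose size is at
most `43/9` times the size of a minimum dominating set. -/
theorem exists_indep_dominating_43_9_approx {V : Type*} [Fintype V]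
    (G : SimpleGraph V) (hG : IsUnitDiskGraph G)
    (Dstar : Set V) (hDstar : IsDominatingSet G Dstar)
    (hmin : ∀ D' : Set V, IsDominatingSet G D' → Dstar.ncard ≤ D'.ncard) :
    ∃ D : Set V, IsIndependentSet G D ∧ IsDominatingSet G D ∧
      (D.ncard : ℝ) ≤ 43 / 9 * Dstar.ncard := by
  classical
  obtain ⟨p, hp⟩ := hG
  have hsymm : Symmetric (fun u v : V => ¬ G.Adj u v) := fun u v h ha => h ha.symm
  have hfin : Dstar.Finite := Set.toFinite _
  set DT : Finset V := hfin.toFinset with hDT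
  have hDTmem : ∀ v, v ∈ DT ↔ v ∈ Dstar := fun v => hfin.mem_toFinset
  -- I : maximum independent subset of Dstar
  obtain ⟨I, hImem, hImax⟩ := Finset.exists_max_image
    ((Finset.univ.powerset).filter fun A : Finset V => A ⊆ DT ∧ IsIndependentSet G ↑A)
    Finset.card ⟨∅, by simp [IsIndependentSet]⟩
  rw [Finset.mem_filter] at hImem
  obtain ⟨-, hIDT, hIind⟩ := hImem
  have hIdom : ∀ v ∈ DT, v ∉ I → ∃ u ∈ I, G.Adj u v := by
    intro v hv hvI
    by_contra hno
    push_neg at hno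
    have hins : IsIndependentSet G ↑(insert v I) := by
      rw [Finset.coe_insert]
      refine (haveI : Std.Symm (fun u v : V => ¬ G.Adj u v) := ⟨fun a b h => hsymm h⟩; Set.pairwise_insert_of_symm).2 ⟨hIind, ?_⟩
      intro u hu _
      exact fun ha => hno u (by simpa using hu) ha.symm
    have := hImax (insert v I) (Finset.mem_filter.2 ⟨Finset.mem_powerset.2
      (Finset.subset_univ _), Finset.insert_subset hv hIDT, hins⟩)
    rw [Finset.card_insert_of_notMem hvI] at this
    omega
  -- D : maximum independent set containing I
  obtain ⟨D, hDmem, hDmax⟩ := Finset.exists_max_image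
    ((Finset.univ.powerset).filter fun A : Finset V => I ⊆ A ∧ IsIndependentSet G ↑A)
    Finset.card ⟨I, Finset.mem_filter.2 ⟨Finset.mem_powerset.2 (Finset.subset_univ _),
      Finset.Subset.refl _, hIind⟩⟩
  rw [Finset.mem_filter] at hDmem
  obtain ⟨-, hID, hDind⟩ := hDmem
  have hDdom : IsDominatingSet G ↑D := by
    intro v hv
    by_contra hno
    push_neg at hno
    have hvD : v ∉ D := by simpa using hv
    have hins : IsIndependentSet G ↑(insert v D) := by
      rw [Finset.coe_insert]
      refine (haveI : Std.Symm (fun u v : V => ¬ G.Adj u v) := ⟨fun a b h => hsymm h⟩; Set.pairwise_insert_of_symm).2 ⟨hDind, ?_⟩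
      intro u hu _
      exact fun ha => hno u (by simpa using hu) ha.symm
    have := hDmax (insert v D) (Finset.mem_filter.2 ⟨Finset.mem_powerset.2
      (Finset.subset_univ _), hID.trans (Finset.subset_insert _ _), hins⟩)
    rw [Finset.card_insert_of_notMem hvD] at this
    omega
  have hDdist : ∀ u ∈ D, ∀ w ∈ D, u ≠ w → 1 < dist (p u) (p w) := by
    intro u hu w hw hne
    have hnadj : ¬ G.Adj u w := hDind (by simpa using hu) (by simpa using hw) hne
    rw [hp] at hnadj
    push_neg at hnadj
    exact hnadj hne
  have hextra : ∀ w ∈ D, w ∉ I → w ∉ DT := by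
    intro w hw hwI hwDT
    obtain ⟨u, hu, hadj⟩ := hIdom w hwDT hwI
    exact hDind (by simpa using hID hu) (by simpa using hw) hadj.ne hadj
  have hdomex : ∀ w ∈ D \ I, ∃ d, d ∈ DT \ I ∧ G.Adj d w := by
    intro w hw
    rw [Finset.mem_sdiff] at hw
    have hwDT := hextra w hw.1 hw.2
    obtain ⟨d, hd, hadj⟩ := hDstar w (fun hc => hwDT ((hDTmem w).2 hc))
    refine ⟨d, Finset.mem_sdiff.2 ⟨(hDTmem d).2 hd, ?_⟩, hadj⟩
    intro hdI
    exact hDind (by simpa using hID hdI) (by simpa using hw.1) hadj.ne hadj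
  set f : V → V := fun w => if h : ∃ d, d ∈ DT \ I ∧ G.Adj d w then h.choose else w with hfdef
  have hfspec : ∀ w ∈ D \ I, f w ∈ DT \ I ∧ G.Adj (f w) w := by
    intro w hw
    have hex : ∃ d, d ∈ DT \ I ∧ G.Adj d w := hdomex w hw
    simp only [hfdef, dif_pos hex]
    exact hex.choose_spec
  have hfib : ∀ d ∈ DT \ I, ((D \ I).filter fun w => f w = d).card ≤ 4 := by
    intro d hd
    by_contra hgt
    push_neg at hgt
    obtain ⟨S, hSsub, hScard⟩ := Finset.exists_subset_card_eq hgt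
    obtain ⟨hdDT, hdI⟩ := Finset.mem_sdiff.1 hd
    obtain ⟨i0, hi0I, hi0adj⟩ := hIdom d hdDT hdI
    set m : Fin 5 → {x // x ∈ S} := fun k => S.equivFin.symm (Fin.cast hScard.symm k) with hm
    have hminj : Function.Injective m := by
      intro a b hab
      have := S.equivFin.symm.injective hab
      exact Fin.cast_injective _ this
    have hSmem : ∀ k : Fin 5, (m k : V) ∈ D \ I ∧ f (m k : V) = d := by
      intro k
      have : (m k : V) ∈ S := (m k).2
      have := Finset.mem_filter.1 (hSsub this)
      exact this
    set ν : Fin 6 → V := Fin.cons i0 (fun k : Fin 5 => (m k : V)) with hν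
    have hνD : ∀ a, ν a ∈ D := by
      intro a
      induction a using Fin.cases with
      | zero => simpa [hν] using hID hi0I
      | succ k => simpa [hν] using Finset.mem_sdiff.1 (hSmem k).1 |>.1
    have hνinj : ∀ a b : Fin 6, a ≠ b → ν a ≠ ν b := by
      intro a b hab
      induction a using Fin.cases with
      | zero =>
        induction b using Fin.cases with
        | zero => exact absurd rfl hab
        | succ k =>
          simp only [hν, Fin.cons_zero, Fin.cons_succ]
          intro he
          exact (Finset.mem_sdiff.1 (hSmem k).1).2 (he ▸ hi0I)
      | succ k =>
        induction b using Fin.cases with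
        | zero =>
          simp only [hν, Fin.cons_zero, Fin.cons_succ]
          intro he
          exact (Finset.mem_sdiff.1 (hSmem k).1).2 (he ▸ hi0I)
        | succ l =>
          simp only [hν, Fin.cons_succ]
          intro he
          exact hab (congrArg Fin.succ (hminj (Subtype.ext he)))
    have hqball : ∀ a, dist (p (ν a)) (p d) ≤ 1 := by
      intro a
      induction a using Fin.cases with
      | zero =>
        simpa [hν] using ((hp i0 d).1 hi0adj).2
      | succ k =>
        have hadj : G.Adj d (m k : V) := by
          have := (hfspec (m k : V) (hSmem k).1).2
          rwa [(hSmem k).2] at this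
        have := ((hp d (m k : V)).1 hadj).2
        simpa [hν, dist_comm] using this
    obtain ⟨a, b, hab, hle⟩ := six_points_ball (p d) (fun a => p (ν a)) hqball
    exact absurd hle (not_le.2 (hDdist (ν a) (hνD a) (ν b) (hνD b) (hνinj a b hab)))
  have hmaps : ∀ w ∈ D \ I, f w ∈ DT \ I := fun w hw => (hfspec w hw).1
  have hcount : (D \ I).card ≤ 4 * (DT \ I).card :=
    Finset.card_le_mul_card_image_of_maps_to hmaps 4 hfib
  have h1 : (D \ I).card + I.card = D.card := Finset.card_sdiff_add_card_eq_card hID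
  have h2 : (DT \ I).card = DT.card - I.card := Finset.card_sdiff_of_subset hIDT
  have h3 : I.card ≤ DT.card := Finset.card_le_card hIDT
  have hcard : D.card ≤ 4 * DT.card := by omega
  refine ⟨↑D, hDind, hDdom, ?_⟩
  rw [Set.ncard_coe_finset]
  have hstar : Dstar.ncard = DT.card := Set.ncard_eq_toFinset_card _ hfin
  rw [hstar]
  have hc : (D.card : ℝ) ≤ 4 * DT.card := by exact_mod_cast hcard
  have h0 : (0:ℝ) ≤ (DT.card : ℝ) := Nat.cast_nonneg _
  linarith
end

section
/- The complete bipartite graph K_{2,3} is not a unit disk graph. Concretely: there do not exist points a, b, x, y, z in the Euclidean plane ℝ² such that the distance between a and b is greater than 1, the distances between x, y, z are pairwise greater than 1, and each of x, y, z is at distance at most 1 from both a and b. -/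
private lemma core1 (A B V T D : ℝ) (hD : 1 ≤ D) (hA0 : 0 ≤ A) (hB0 : 0 ≤ B) (hVT : 0 ≤ V*T)
    (hA : (A+D/2)^2+V^2 ≤ D) (hB : (B+D/2)^2+T^2 ≤ D) : (A+B)^2+(V-T)^2 ≤ D := by
  have hAD : A ≤ D/2 := by nlinarith [sq_nonneg V]
  have hBD : B ≤ D/2 := by nlinarith [sq_nonneg T]
  rcases le_total (V^2) (T^2) with h | h
  · have hVVT : V^2 ≤ V*T := by nlinarith [sq_nonneg (V-T), sq_nonneg (V+T)]
    nlinarith [sq_nonneg V]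
  · have hTVT : T^2 ≤ V*T := by nlinarith [sq_nonneg (V-T), sq_nonneg (V+T)]
    nlinarith [sq_nonneg T]

private lemma core2 (U V S T D : ℝ) (hD : 1 ≤ D) (hVT : 0 ≤ V*T)
    (h1 : (U+D/2)^2+V^2 ≤ D) (h2 : (U-D/2)^2+V^2 ≤ D)
    (h3 : (S+D/2)^2+T^2 ≤ D) (h4 : (S-D/2)^2+T^2 ≤ D) :
    (U-S)^2+(V-T)^2 ≤ D := by
  have hA : (|U|+D/2)^2+V^2 ≤ D := by
    rcases abs_cases U with ⟨h, _⟩ | ⟨h, _⟩ <;> rw [h] <;> nlinarith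
  have hB : (|S|+D/2)^2+T^2 ≤ D := by
    rcases abs_cases S with ⟨h, _⟩ | ⟨h, _⟩ <;> rw [h] <;> nlinarith
  have key := core1 |U| |S| V T D hD (abs_nonneg U) (abs_nonneg S) hVT hA hB
  have htri : (U-S)^2 ≤ (|U|+|S|)^2 := by
    nlinarith [le_abs_self (U*S), neg_abs_le (U*S), abs_mul U S, sq_abs U, sq_abs S]
  linarith

private lemma pair (a0 a1 b0 b1 x0 x1 y0 y1 : ℝ)
    (hD : 1 < (b0-a0)^2 + (b1-a1)^2)
    (hxa : (x0-a0)^2+(x1-a1)^2 ≤ 1) (hxb : (x0-b0)^2+(x1-b1)^2 ≤ 1)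
    (hya : (y0-a0)^2+(y1-a1)^2 ≤ 1) (hyb : (y0-b0)^2+(y1-b1)^2 ≤ 1)
    (hside : 0 ≤ ((b0-a0)*(x1-a1) - (b1-a1)*(x0-a0)) * ((b0-a0)*(y1-a1) - (b1-a1)*(y0-a0))) :
    (x0-y0)^2+(x1-y1)^2 ≤ 1 := by
  have hDpos : (0:ℝ) < (b0-a0)^2 + (b1-a1)^2 := by linarith
  have m1 := mul_le_mul_of_nonneg_right hxa (le_of_lt hDpos)
  have m2 := mul_le_mul_of_nonneg_right hxb (le_of_lt hDpos)
  have m3 := mul_le_mul_of_nonneg_right hya (le_of_lt hDpos)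
  have m4 := mul_le_mul_of_nonneg_right hyb (le_of_lt hDpos)
  rw [one_mul] at m1 m2 m3 m4
  have e1 : ((x0-a0)^2+(x1-a1)^2) * ((b0-a0)^2 + (b1-a1)^2)
      = ((b0-a0)*(x0 - (a0+b0)/2) + (b1-a1)*(x1 - (a1+b1)/2) + ((b0-a0)^2 + (b1-a1)^2)/2)^2
      + ((b0-a0)*(x1-a1) - (b1-a1)*(x0-a0))^2 := by ring
  have e2 : ((x0-b0)^2+(x1-b1)^2) * ((b0-a0)^2 + (b1-a1)^2)
      = ((b0-a0)*(x0 - (a0+b0)/2) + (b1-a1)*(x1 - (a1+b1)/2) - ((b0-a0)^2 + (b1-a1)^2)/2)^2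
      + ((b0-a0)*(x1-a1) - (b1-a1)*(x0-a0))^2 := by ring
  have e3 : ((y0-a0)^2+(y1-a1)^2) * ((b0-a0)^2 + (b1-a1)^2)
      = ((b0-a0)*(y0 - (a0+b0)/2) + (b1-a1)*(y1 - (a1+b1)/2) + ((b0-a0)^2 + (b1-a1)^2)/2)^2
      + ((b0-a0)*(y1-a1) - (b1-a1)*(y0-a0))^2 := by ring
  have e4 : ((y0-b0)^2+(y1-b1)^2) * ((b0-a0)^2 + (b1-a1)^2)
      = ((b0-a0)*(y0 - (a0+b0)/2) + (b1-a1)*(y1 - (a1+b1)/2) - ((b0-a0)^2 + (b1-a1)^2)/2)^2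
      + ((b0-a0)*(y1-a1) - (b1-a1)*(y0-a0))^2 := by ring
  have key := core2 ((b0-a0)*(x0 - (a0+b0)/2) + (b1-a1)*(x1 - (a1+b1)/2))
    ((b0-a0)*(x1-a1) - (b1-a1)*(x0-a0))
    ((b0-a0)*(y0 - (a0+b0)/2) + (b1-a1)*(y1 - (a1+b1)/2))
    ((b0-a0)*(y1-a1) - (b1-a1)*(y0-a0))
    ((b0-a0)^2 + (b1-a1)^2) (le_of_lt hD) hside
    (by linarith) (by linarith) (by linarith) (by linarith)
  have idxy : ((x0-y0)^2+(x1-y1)^2) * ((b0-a0)^2 + (b1-a1)^2)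
      = ((b0-a0)*(x0 - (a0+b0)/2) + (b1-a1)*(x1 - (a1+b1)/2)
         - ((b0-a0)*(y0 - (a0+b0)/2) + (b1-a1)*(y1 - (a1+b1)/2)))^2
      + (((b0-a0)*(x1-a1) - (b1-a1)*(x0-a0)) - ((b0-a0)*(y1-a1) - (b1-a1)*(y0-a0)))^2 := by
    ring
  have h : ((x0-y0)^2+(x1-y1)^2) * ((b0-a0)^2 + (b1-a1)^2) ≤ 1 * ((b0-a0)^2 + (b1-a1)^2) := by
    rw [idxy, one_mul]; exact key
  exact le_of_mul_le_mul_right h hDpos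

private lemma signs (a b c : ℝ) : 0 ≤ a*b ∨ 0 ≤ a*c ∨ 0 ≤ b*c := by
  rcases le_total 0 a with ha|ha <;> rcases le_total 0 b with hb|hb <;>
    rcases le_total 0 c with hc|hc <;>
    first
      | (left; nlinarith)
      | (right; left; nlinarith)
      | (right; right; nlinarith)

private lemma dist_sq_eq (p q : EuclideanSpace ℝ (Fin 2)) :
    dist p q ^ 2 = (p 0 - q 0)^2 + (p 1 - q 1)^2 := by
  rw [EuclideanSpace.dist_eq, Real.sq_sqrt (by positivity)]
  simp [Fin.sum_univ_two, Real.dist_eq, sq_abs]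

/-- `K_{2,3}` is not a unit disk graph: there are no planar points `a, b, x, y, z`
with `dist a b > 1`, the points `x, y, z` pairwise at distance greater than 1,
and each of `x, y, z` within distance 1 of both `a` and `b`. -/
theorem K23_not_unit_disk_graph :
    ¬ ∃ a b x y z : EuclideanSpace ℝ (Fin 2),
      1 < dist a b ∧
      1 < dist x y ∧ 1 < dist x z ∧ 1 < dist y z ∧
      dist x a ≤ 1 ∧ dist x b ≤ 1 ∧
      dist y a ≤ 1 ∧ dist y b ≤ 1 ∧
      dist z a ≤ 1 ∧ dist z b ≤ 1 := by
  rintro ⟨a, b, x, y, z, hab, hxy, hxz, hyz, hxa, hxb, hya, hyb, hza, hzb⟩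
  have sq_lt : ∀ p q : EuclideanSpace ℝ (Fin 2), 1 < dist p q →
      1 < (p 0 - q 0)^2 + (p 1 - q 1)^2 := by
    intro p q h
    rw [← dist_sq_eq]
    nlinarith [dist_nonneg (x := p) (y := q)]
  have sq_le : ∀ p q : EuclideanSpace ℝ (Fin 2), dist p q ≤ 1 →
      (p 0 - q 0)^2 + (p 1 - q 1)^2 ≤ 1 := by
    intro p q h
    rw [← dist_sq_eq]
    nlinarith [dist_nonneg (x := p) (y := q)]
  have hab' := sq_lt a b hab
  have hab'' : 1 < (b 0 - a 0)^2 + (b 1 - a 1)^2 := by nlinarith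
  have hxa' := sq_le x a hxa
  have hxb' := sq_le x b hxb
  have hya' := sq_le y a hya
  have hyb' := sq_le y b hyb
  have hza' := sq_le z a hza
  have hzb' := sq_le z b hzb
  rcases signs ((b 0 - a 0)*(x 1 - a 1) - (b 1 - a 1)*(x 0 - a 0))
      ((b 0 - a 0)*(y 1 - a 1) - (b 1 - a 1)*(y 0 - a 0))
      ((b 0 - a 0)*(z 1 - a 1) - (b 1 - a 1)*(z 0 - a 0)) with hs | hs | hs
  · have := pair (a 0) (a 1) (b 0) (b 1) (x 0) (x 1) (y 0) (y 1)
      hab'' hxa' hxb' hya' hyb' hs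
    have := sq_lt x y hxy
    linarith
  · have := pair (a 0) (a 1) (b 0) (b 1) (x 0) (x 1) (z 0) (z 1)
      hab'' hxa' hxb' hza' hzb' hs
    have := sq_lt x z hxz
    linarith
  · have := pair (a 0) (a 1) (b 0) (b 1) (y 0) (y 1) (z 0) (z 1)
      hab'' hya' hyb' hza' hzb' hs
    have := sq_lt y z hyz
    linarith
end
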